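/- arXiv:1309.5818 — 9 statements merged into one kernel-verified Lean document; each statement's English description precedes it below -/
import Mathlib

section
/- Let p : X → Y and q : Y → Z be morphisms of simplicial sets. If p is a Kan fibration that is surjective in every simplicial degree, and the composite q ∘ p : X → Z is a Kan fibration, then q : Y → Z is a Kan fibration. -/
open CategoryTheory Simplicial SSet SimplexCategory
open SSet.stdSimplex (asOrderHom)

universe u

namespace KanLiftAux

/-- The generalized horn `Λ^S[n] ⊆ Δ[n]`: the union of the faces `∂ⱼΔ[n]` for `j ∉ S`. -/
def ghorn (n : ℕ) (S : Set (Fin (n + 1))) : SSet.{u} where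
  obj m := { α : Δ[n].obj m // Set.range (asOrderHom α) ∪ S ≠ Set.univ }
  map {m₁ m₂} f := TypeCat.ofHom fun α =>
    ⟨Δ[n].map f α.1, by
      intro h; apply α.property
      rw [Set.eq_univ_iff_forall] at h ⊢; intro j
      apply Or.imp _ id (h j)
      intro hj
      exact Set.range_comp_subset_range _ _ hj⟩

set_option linter.unusedVariables false in
/-- The inclusion of a generalized horn into the standard simplex. -/
def ghornIncl (n : ℕ) (S : Set (Fin (n + 1))) : ghorn.{u} n S ⟶ Δ[n] where
  app m := TypeCat.ofHom fun (α : { α : Δ[n].obj m // _ }) => α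

/-- The inclusion between generalized horns. -/
def ghornMap (n : ℕ) {S S' : Set (Fin (n + 1))} (h : S' ⊆ S) : ghorn.{u} n S ⟶ ghorn n S' where
  app m := TypeCat.ofHom fun α => ⟨α.1, by
    intro hu
    apply α.2
    rw [Set.eq_univ_iff_forall] at hu ⊢
    exact fun x => (hu x).imp id (fun hx => h hx)⟩

lemma ghornMap_incl (n : ℕ) {S S' : Set (Fin (n+1))} (h : S' ⊆ S) :
    ghornMap.{u} n h ≫ ghornIncl n S' = ghornIncl n S := rfl

lemma ghornMap_comp (n : ℕ) {S S' S'' : Set (Fin (n+1))} (h : S' ⊆ S) (h' : S'' ⊆ S') :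
    ghornMap.{u} n h ≫ ghornMap n h' = ghornMap n (h'.trans h) := rfl

instance isEmpty_ghorn_univ (n : ℕ) (m : SimplexCategoryᵒᵖ) :
    IsEmpty ((ghorn.{u} n Set.univ).obj m) :=
  ⟨fun α => α.2 (by simp)⟩

lemma yonedaEquiv_comp {W V : SSet.{u}} {nn : SimplexCategory} (f : stdSimplex.obj nn ⟶ W)
    (w : W ⟶ V) : yonedaEquiv (f ≫ w) = w.app _ (yonedaEquiv f) := rfl

set_option linter.unusedVariables false in
/-- Any map out of the empty simplicial set `Λ^univ[n]`. -/
def botMap (n : ℕ) (W : SSet.{u}) : ghorn.{u} n Set.univ ⟶ W where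
  app m := TypeCat.ofHom fun α => (isEmpty_ghorn_univ n m).elim α
  naturality m₁ m₂ f := by ext α; exact (isEmpty_ghorn_univ n m₁).elim α

/-- Factor an `m`-simplex of `Δ[n+1]` not containing `j` through the `j`-th face. -/
def fβ {n : ℕ} {m : SimplexCategoryᵒᵖ} (α : Δ[n+1].obj m) (j : Fin (n+2)) : Δ[n].obj m :=
  stdSimplex.objEquiv.symm
    (factor_δ (m := m.unop.len) (stdSimplex.objEquiv α) j)

lemma fβ_natural {m₁ m₂ : SimplexCategoryᵒᵖ} (f : m₁ ⟶ m₂) {n : ℕ} (j : Fin (n+2))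
    (a : Δ[n+1].obj m₁) : fβ (Δ[n+1].map f a) j = Δ[n].map f (fβ a j) := rfl

lemma face_fβ {n : ℕ} (j : Fin (n+2)) {m : SimplexCategoryᵒᵖ} (α : Δ[n+1].obj m)
    (h : ∀ k, asOrderHom α k ≠ j) :
    (SSet.stdSimplex.map (δ j)).app m (fβ α j) = α := by
  have := factor_δ_spec (m := m.unop.len) (stdSimplex.objEquiv α) j h
  apply stdSimplex.objEquiv.injective
  exact this

lemma asOrderHom_fβ {n : ℕ} (j : Fin (n+2)) {m : SimplexCategoryᵒᵖ} (α : Δ[n+1].obj m)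
    (h : ∀ k, asOrderHom α k ≠ j) (k) :
    j.succAbove (asOrderHom (fβ α j) k) = asOrderHom α k := by
  conv_rhs => rw [← face_fβ j α h]
  rfl

/-- The `j`-th face of `Δ[n+1]`, as a map into a generalized horn not containing it. -/
def faceToGhorn (n : ℕ) (S : Set (Fin (n+2))) (j : Fin (n+2)) (hj : j ∉ S) :
    Δ[n] ⟶ ghorn.{u} (n+1) S where
  app m := TypeCat.ofHom fun β => ⟨(SSet.stdSimplex.map (δ j)).app m β, by
    rw [Set.ne_univ_iff_exists_notMem]
    refine ⟨j, ?_⟩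
    rintro (⟨k, hk⟩ | hjS)
    · exact Fin.succAbove_ne j _ hk
    · exact hj hjS⟩
  naturality m₁ m₂ f := by
    ext β
    apply Subtype.ext
    exact NatTrans.naturality_apply (SSet.stdSimplex.map (δ j)) f β

/-- `δ j` induces a map from the generalized horn of `Δ[n]` for the preimage of `S`
to the generalized horn of `Δ[n+1]` for `S`. -/
def ghornToGhorn (n : ℕ) (S : Set (Fin (n+2))) (j : Fin (n+2)) :
    ghorn.{u} n {t | j.succAbove t ∈ S} ⟶ ghorn (n+1) S where
  app m := TypeCat.ofHom fun β => ⟨(SSet.stdSimplex.map (δ j)).app m β.1, by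
    obtain ⟨k, hk⟩ := Set.ne_univ_iff_exists_notMem _ |>.mp β.2
    rw [Set.ne_univ_iff_exists_notMem]
    refine ⟨j.succAbove k, ?_⟩
    rintro (⟨l, hl⟩ | hS)
    · exact hk (Or.inl ⟨l, Fin.succAbove_right_injective hl⟩)
    · exact hk (Or.inr hS)⟩
  naturality m₁ m₂ f := by
    ext β
    apply Subtype.ext
    exact NatTrans.naturality_apply (SSet.stdSimplex.map (δ j)) f β.1

section

variable {X Y : SSet.{u}} (p : X ⟶ Y)

lemma lift_of_univ (hsurj : ∀ n, Function.Surjective (p.app n)) (n : ℕ) :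
    HasLiftingProperty (ghornIncl.{u} n Set.univ) p := by
  constructor
  intro f g sq
  obtain ⟨x, hx⟩ := hsurj _ (yonedaEquiv g)
  exact CommSq.HasLift.mk'
    { l := yonedaEquiv.symm x
      fac_left := by
        apply NatTrans.ext; funext m; ext α
        exact (isEmpty_ghorn_univ n m).elim α
      fac_right := by
        apply yonedaEquiv.injective
        rw [yonedaEquiv_comp, Equiv.apply_symm_apply, hx] }

lemma lift_step (n : ℕ) (S : Set (Fin (n+2))) (j : Fin (n+2))
    (hj : j ∈ S) (hS' : (S \ {j}).Nonempty)
    (ihA : ∀ (T : Set (Fin (n+1))), T.Nonempty → HasLiftingProperty (ghornIncl.{u} n T) p) :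
    HasLiftingProperty (ghornMap.{u} (n+1) (Set.diff_subset : S \ {j} ⊆ S)) p := by
  classical
  have hjS' : j ∉ S \ {j} := by simp
  constructor
  intro u v sq
  set T : Set (Fin (n+1)) := {t | j.succAbove t ∈ S} with hT
  have hTne : T.Nonempty := by
    obtain ⟨s, hsS, hsj⟩ := hS'
    obtain ⟨t, ht⟩ := Fin.exists_succAbove_eq (show s ≠ j by simpa using hsj)
    exact ⟨t, show j.succAbove t ∈ S from ht ▸ hsS⟩
  haveI := ihA T hTne
  have key : ghornToGhorn.{u} n S j ≫ ghornMap (n+1) (Set.diff_subset : S \ {j} ⊆ S)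
      = ghornIncl n T ≫ faceToGhorn n (S \ {j}) j hjS' := rfl
  have sq1 : CommSq (ghornToGhorn n S j ≫ u) (ghornIncl.{u} n T) p
      (faceToGhorn n (S \ {j}) j hjS' ≫ v) :=
    ⟨by rw [Category.assoc, sq.w, ← Category.assoc, key, Category.assoc]⟩
  -- membership of `fβ α j` in `ghorn n T`
  have mem : ∀ {m : SimplexCategoryᵒᵖ} (α : Δ[n+1].obj m),
      Set.range (asOrderHom α) ∪ S ≠ Set.univ → (∀ k, asOrderHom α k ≠ j) →
      Set.range (asOrderHom (fβ α j)) ∪ T ≠ Set.univ := by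
    intro m α hα hjr
    obtain ⟨k, hk⟩ := Set.ne_univ_iff_exists_notMem _ |>.mp hα
    rw [Set.ne_univ_iff_exists_notMem]
    have hkj : k ≠ j := fun h => hk (Or.inr (h ▸ hj))
    obtain ⟨t, ht⟩ := Fin.exists_succAbove_eq hkj
    refine ⟨t, ?_⟩
    rintro (⟨l, hl⟩ | htT)
    · refine hk (Or.inl ⟨l, ?_⟩)
      rw [← asOrderHom_fβ j α hjr l, hl, ht]
    · exact hk (Or.inr (ht ▸ htT))
  -- consistency of the two branches
  have consist : ∀ {m : SimplexCategoryᵒᵖ} (α : Δ[n+1].obj m)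
      (hα : Set.range (asOrderHom α) ∪ S ≠ Set.univ) (hjr : ∀ k, asOrderHom α k ≠ j),
      u.app m ⟨α, hα⟩ = sq1.lift.app m (fβ α j) := by
    intro m α hα hjr
    have h1 := ConcreteCategory.congr_hom (NatTrans.congr_app sq1.fac_left m)
      (⟨fβ α j, mem α hα hjr⟩ : (ghorn n T).obj m)
    have h2 : (ghornToGhorn n S j).app m ⟨fβ α j, mem α hα hjr⟩ = ⟨α, hα⟩ :=
      Subtype.ext (face_fβ j α hjr)
    rw [← h2]
    exact h1.symm
  -- membership of `α` in `ghorn (n+1) S` when `j` occurs in `α`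
  have memS : ∀ {m : SimplexCategoryᵒᵖ} (α : (ghorn.{u} (n+1) (S \ {j})).obj m),
      ¬(∀ k, asOrderHom α.1 k ≠ j) →
      Set.range (asOrderHom α.1) ∪ S ≠ Set.univ := by
    intro m α hr
    push_neg at hr
    obtain ⟨k₀, hk₀⟩ := hr
    obtain ⟨k, hk⟩ := Set.ne_univ_iff_exists_notMem _ |>.mp α.2
    rw [Set.ne_univ_iff_exists_notMem]
    refine ⟨k, ?_⟩
    rintro (hkr | hkS)
    · exact hk (Or.inl hkr)
    · exact hk (Or.inr ⟨hkS, fun hkj =>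
        hk (Or.inl ⟨k₀, hk₀.trans (Set.mem_singleton_iff.mp hkj).symm⟩)⟩)
  refine CommSq.HasLift.mk'
    { l :=
      { app := fun m => TypeCat.ofHom fun α =>
          if h : ∀ k, asOrderHom α.1 k ≠ j
          then sq1.lift.app m (fβ α.1 j)
          else u.app m ⟨α.1, memS α h⟩
        naturality := ?_ }
      fac_left := ?_
      fac_right := ?_ }
  · intro m₁ m₂ f
    ext α
    simp only [TypeCat.Fun.toFun_apply, types_comp_apply, TypeCat.ofHom_apply]
    by_cases h₁ : ∀ k, asOrderHom α.1 k ≠ j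
    · have h₂ : ∀ k, asOrderHom ((ghorn (n+1) (S \ {j})).map f α).1 k ≠ j := fun k => h₁ _
      rw [dif_pos h₂, dif_pos h₁]
      have e : fβ ((ghorn (n+1) (S \ {j})).map f α).1 j = Δ[n].map f (fβ α.1 j) := rfl
      rw [e]
      exact NatTrans.naturality_apply sq1.lift f (fβ α.1 j)
    · by_cases h₂ : ∀ k, asOrderHom ((ghorn (n+1) (S \ {j})).map f α).1 k ≠ j
      · rw [dif_pos h₂, dif_neg h₁]
        rw [← consist ((ghorn (n+1) (S \ {j})).map f α).1
          (((ghorn (n+1) S).map f ⟨α.1, memS α h₁⟩).2) h₂]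
        exact NatTrans.naturality_apply u f ⟨α.1, memS α h₁⟩
      · rw [dif_neg h₂, dif_neg h₁]
        exact NatTrans.naturality_apply u f ⟨α.1, memS α h₁⟩
  · apply NatTrans.ext; funext m; ext α
    show (if h : ∀ k, asOrderHom α.1 k ≠ j
        then sq1.lift.app m (fβ α.1 j)
        else u.app m ⟨α.1,
          memS ((ghornMap (n+1) (Set.diff_subset : S \ {j} ⊆ S)).app m α) h⟩)
      = u.app m α
    split_ifs with h₁
    · exact (consist α.1 α.2 h₁).symm
    · rfl
  · apply NatTrans.ext; funext m; ext α
    show p.app m (if h : ∀ k, asOrderHom α.1 k ≠ j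
        then sq1.lift.app m (fβ α.1 j)
        else u.app m ⟨α.1, memS α h⟩)
      = v.app m α
    split_ifs with h₁
    · have h3 := ConcreteCategory.congr_hom (NatTrans.congr_app sq1.fac_right m) (fβ α.1 j)
      have h2 : (faceToGhorn n (S \ {j}) j hjS').app m (fβ α.1 j) = α :=
        Subtype.ext (face_fβ j α.1 h₁)
      conv_rhs => rw [← h2]
      exact h3
    · exact ConcreteCategory.congr_hom (NatTrans.congr_app sq.w m) ⟨α.1, memS α h₁⟩

lemma liftA (hp : ∀ (n : ℕ) (i : Fin (n + 2)), HasLiftingProperty ((horn (n + 1) i).ι) p)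
    (hsurj : ∀ n, Function.Surjective (p.app n)) :
    ∀ (n : ℕ) (S : Set (Fin (n+1))), S.Nonempty → HasLiftingProperty (ghornIncl.{u} n S) p := by
  intro n
  induction n with
  | zero =>
    intro S hS
    have : S = Set.univ := by
      ext x
      simp only [Set.mem_univ, iff_true]
      obtain ⟨s, hs⟩ := hS
      rwa [show x = s from Fin.ext (by omega)]
    rw [this]
    exact lift_of_univ p hsurj 0
  | succ n ihn =>
    suffices H : ∀ (k : ℕ) (S : Set (Fin (n+2))), S.ncard ≤ k → S.Nonempty →
        HasLiftingProperty (ghornIncl.{u} (n+1) S) p by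
      intro S hS
      exact H S.ncard S le_rfl hS
    intro k
    induction k with
    | zero =>
      intro S hk hS
      exact absurd (Set.ncard_eq_zero (S.toFinite) |>.mp (Nat.le_zero.mp hk))
        (Set.nonempty_iff_ne_empty.mp hS)
    | succ k ihk =>
      intro S hk hS
      by_cases hex : ∃ j ∈ S, (S \ {j}).Nonempty
      · obtain ⟨j, hj, hS'⟩ := hex
        haveI h1 : HasLiftingProperty
            (ghornMap.{u} (n+1) (Set.diff_subset : S \ {j} ⊆ S)) p :=
          lift_step p n S j hj hS' ihn
        haveI h2 : HasLiftingProperty (ghornIncl.{u} (n+1) (S \ {j})) p := by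
          apply ihk
          · have := Set.ncard_diff_singleton_lt_of_mem hj (S.toFinite)
            omega
          · exact hS'
        rw [← ghornMap_incl (n+1) (Set.diff_subset : S \ {j} ⊆ S)]
        infer_instance
      · push_neg at hex
        obtain ⟨j, hj⟩ := hS
        have hSj : S = {j} := by
          apply Set.eq_singleton_iff_unique_mem.mpr
          refine ⟨hj, fun x hx => ?_⟩
          have h0 : j ∈ ({x} : Set _) := Set.diff_eq_empty.mp (hex x hx) hj
          exact (Set.mem_singleton_iff.mp h0).symm
        rw [hSj]
        exact hp n j

lemma liftB (hp : ∀ (n : ℕ) (i : Fin (n + 2)), HasLiftingProperty ((horn (n + 1) i).ι) p)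
    (hsurj : ∀ n, Function.Surjective (p.app n)) (n : ℕ) :
    ∀ (k : ℕ) (S S' : Set (Fin (n+2))) (h : S' ⊆ S), S'.Nonempty → (S \ S').ncard ≤ k →
      HasLiftingProperty (ghornMap.{u} (n+1) h) p := by
  intro k
  induction k with
  | zero =>
    intro S S' h hS' hk
    have : S = S' := by
      apply Set.Subset.antisymm _ h
      have := Set.diff_eq_empty.mp (Set.ncard_eq_zero ((S \ S').toFinite) |>.mp
        (Nat.le_zero.mp hk))
      exact this
    subst this
    have : ghornMap.{u} (n+1) h = 𝟙 _ := by
      apply NatTrans.ext; funext m; ext α; rfl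
    rw [this]
    infer_instance
  | succ k ihk =>
    intro S S' h hS' hk
    by_cases hSS : S = S'
    · subst hSS
      have : ghornMap.{u} (n+1) h = 𝟙 _ := by
        apply NatTrans.ext; funext m; ext α; rfl
      rw [this]
      infer_instance
    · have : (S \ S').Nonempty := by
        rw [Set.diff_nonempty]
        intro hsub
        exact hSS (Set.Subset.antisymm hsub h)
      obtain ⟨j, hjS, hjS'⟩ := this
      have h1 : S' ⊆ S \ {j} := fun x hx =>
        ⟨h hx, fun hxj => hjS' ((Set.mem_singleton_iff.mp hxj) ▸ hx)⟩
      haveI i1 : HasLiftingProperty (ghornMap.{u} (n+1) (Set.diff_subset : S \ {j} ⊆ S)) p :=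
        lift_step p n S j hjS (hS'.mono h1) (liftA p hp hsurj n)
      haveI i2 : HasLiftingProperty (ghornMap.{u} (n+1) h1) p := by
        apply ihk
        · exact hS'
        · have e : (S \ {j}) \ S' = (S \ S') \ {j} := by
            ext x; simp [Set.mem_diff]; tauto
          rw [e]
          have := Set.ncard_diff_singleton_lt_of_mem
            (show j ∈ (S \ S') from ⟨hjS, hjS'⟩) ((S \ S').toFinite)
          omega
      rw [← ghornMap_comp (n+1) (Set.diff_subset : S \ {j} ⊆ S) h1]
      infer_instance

end

end KanLiftAux

open KanLiftAux

/-- A morphism of simplicial sets is a *Kan fibration* if it has the right lifting property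
with respect to every horn inclusion `Λ[n, k] ⟶ Δ[n]` for `n ≥ 1` and `0 ≤ k ≤ n`. -/
def IsKanFibration {X Y : SSet} (p : X ⟶ Y) : Prop :=
  ∀ (n : ℕ) (i : Fin (n + 2)), HasLiftingProperty (horn (n + 1) i).ι p

/-- If `p : X → Y` is a Kan fibration which is surjective in every simplicial degree and the
composite `q ∘ p : X → Z` is a Kan fibration, then `q : Y → Z` is a Kan fibration. -/
theorem kanFibration_of_comp {X Y Z : SSet} (p : X ⟶ Y) (q : Y ⟶ Z)
    (hp : IsKanFibration p) (hsurj : ∀ n, Function.Surjective (p.app n))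
    (hqp : IsKanFibration (p ≫ q)) : IsKanFibration q := by
  intro n i
  constructor
  intro f g sq
  -- lift `f : Λ[n+1, i] ⟶ Y` along `p`
  haveI := liftB p hp hsurj n (Set.univ \ {i}).ncard Set.univ {i} (Set.subset_univ {i})
    ⟨i, rfl⟩ le_rfl
  have sq2 : CommSq (botMap (n+1) X) (ghornMap (n+1) (Set.subset_univ {i})) p
      (show ghorn (n+1) {i} ⟶ Y from f) :=
    ⟨by apply NatTrans.ext; funext m; ext α; exact (isEmpty_ghorn_univ (n+1) m).elim α⟩
  let ftilde : (Λ[n+1, i] : SSet) ⟶ X := sq2.lift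
  have hftilde : ftilde ≫ p = f := sq2.fac_right
  have sq3 : CommSq ftilde (horn (n+1) i).ι (p ≫ q) g :=
    ⟨by rw [← Category.assoc, hftilde, sq.w]⟩
  haveI := hqp n i
  exact CommSq.HasLift.mk'
    { l := sq3.lift ≫ p
      fac_left := by rw [← Category.assoc, sq3.fac_left, hftilde]
      fac_right := by rw [Category.assoc]; exact sq3.fac_right }
end

section
/- Let G be a simplicial group acting freely on the right on a simplicial set X, and let q : X → Y be a quotient map for this action. Then q is a Kan fibration. -/
open CategoryTheory Simplicial SSet

/-- A right action of a simplicial group `G` on a simplicial set `X`: a right action of the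
group `G n` on the set `X n` in every simplicial degree, compatible with all simplicial
structure maps. -/
structure SimplicialRightAction (G : SimplexCategoryᵒᵖ ⥤ GrpCat) (X : SSet) where
  act : ∀ n : SimplexCategoryᵒᵖ, X.obj n → G.obj n → X.obj n
  act_one : ∀ (n : SimplexCategoryᵒᵖ) (x : X.obj n), act n x 1 = x
  act_mul : ∀ (n : SimplexCategoryᵒᵖ) (x : X.obj n) (g h : G.obj n),
    act n (act n x g) h = act n x (g * h)
  act_map : ∀ {m n : SimplexCategoryᵒᵖ} (α : m ⟶ n) (x : X.obj m) (g : G.obj m),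
    X.map α (act m x g) = act n (X.map α x) (G.map α g)

/-- The action is *free* if `x · g = x` implies `g = 1`. -/
def SimplicialRightAction.IsFree {G : SimplexCategoryᵒᵖ ⥤ GrpCat} {X : SSet}
    (a : SimplicialRightAction G X) : Prop :=
  ∀ (n : SimplexCategoryᵒᵖ) (x : X.obj n) (g : G.obj n), a.act n x g = x → g = 1

/-- A morphism `q : X ⟶ Y` is a *quotient map* for the action if it is degreewise surjective
and identifies exactly the orbits of the action. -/
def SimplicialRightAction.IsQuotientMap {G : SimplexCategoryᵒᵖ ⥤ GrpCat} {X : SSet}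
    (a : SimplicialRightAction G X) {Y : SSet} (q : X ⟶ Y) : Prop :=
  (∀ n : SimplexCategoryᵒᵖ, Function.Surjective (q.app n)) ∧
    ∀ (n : SimplexCategoryᵒᵖ) (x x' : X.obj n),
      q.app n x = q.app n x' ↔ ∃ g : G.obj n, x' = a.act n x g

section KanAux

open SimplexCategory Opposite

namespace KanFibAux

/- ### Generalities on contravariant functors applied to composites -/

lemma mapop_comp (G : SimplexCategoryᵒᵖ ⥤ GrpCat) {a b c : SimplexCategory} (u : a ⟶ b) (v : b ⟶ c)
    (x : G.obj (op c)) : G.map (u ≫ v).op x = G.map u.op (G.map v.op x) := by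
  rw [op_comp, G.map_comp]; rfl

lemma mapop_comp' (X : SSet) {a b c : SimplexCategory} (u : a ⟶ b) (v : b ⟶ c)
    (x : X.obj (op c)) : X.map (u ≫ v).op x = X.map u.op (X.map v.op x) := by
  rw [op_comp, X.map_comp]; rfl

/- ### Simplicial identities with `Fin.mk` indices -/

lemma dd {n : ℕ} (a b : ℕ) (hab : a < b) (hb : b < n + 3) :
    (δ (⟨a, by omega⟩ : Fin (n+2)) ≫ δ (⟨b, hb⟩ : Fin (n+3)) : (⦋n⦌ : SimplexCategory) ⟶ ⦋n+2⦌) =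
      δ (⟨b-1, by omega⟩ : Fin (n+2)) ≫ δ (⟨a, by omega⟩ : Fin (n+3)) := by
  have := SimplexCategory.δ_comp_δ (n := n) (i := ⟨a, by omega⟩) (j := ⟨b-1, by omega⟩)
    (by simp [Fin.le_def]; omega)
  convert this using 3 <;> apply Fin.ext <;> simp <;> omega

lemma ds_self {n : ℕ} (r : ℕ) (hr : r < n + 1) :
    (δ (⟨r, by omega⟩ : Fin (n+2)) ≫ σ (⟨r, hr⟩ : Fin (n+1)) : (⦋n⦌ : SimplexCategory) ⟶ ⦋n⦌) = 𝟙 _ :=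
  SimplexCategory.δ_comp_σ_self' (by apply Fin.ext; simp)

lemma ds_le {n : ℕ} (m r : ℕ) (hm : m < r) (hr : r < n + 2) :
    (δ (⟨m, by omega⟩ : Fin (n+3)) ≫ σ (⟨r, hr⟩ : Fin (n+2)) : (⦋n+1⦌ : SimplexCategory) ⟶ ⦋n+1⦌) =
      σ (⟨r-1, by omega⟩ : Fin (n+1)) ≫ δ (⟨m, by omega⟩ : Fin (n+2)) := by
  have := SimplexCategory.δ_comp_σ_of_le (n := n) (i := ⟨m, by omega⟩) (j := ⟨r-1, by omega⟩)
    (by simp [Fin.le_def]; omega)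
  convert this using 3 <;> apply Fin.ext <;> simp <;> omega

lemma ds_gt {n : ℕ} (m r : ℕ) (hm : r + 1 < m) (hmn : m < n + 3) :
    (δ (⟨m, hmn⟩ : Fin (n+3)) ≫ σ (⟨r, by omega⟩ : Fin (n+2)) : (⦋n+1⦌ : SimplexCategory) ⟶ ⦋n+1⦌) =
      σ (⟨r, by omega⟩ : Fin (n+1)) ≫ δ (⟨m-1, by omega⟩ : Fin (n+2)) := by
  have := SimplexCategory.δ_comp_σ_of_gt (n := n) (i := ⟨m-1, by omega⟩) (j := ⟨r, by omega⟩)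
    (by simp [Fin.lt_def]; omega)
  convert this using 3 <;> apply Fin.ext <;> simp <;> omega

/- ### The correction steps in the proof of Moore's theorem -/

lemma vanish (G : SimplexCategoryᵒᵖ ⥤ GrpCat) {a b c e f : SimplexCategory}
    (dR : b ⟶ c) (w : G.obj (op c)) (gR : G.obj (op b))
    (sc : e ⟶ b) (dJ : a ⟶ e) (s' : a ⟶ f) (u : f ⟶ b)
    (h : dJ ≫ sc = s' ≫ u)
    (hu : G.map u.op (G.map dR.op w) = G.map u.op gR) :
    G.map dJ.op (G.map sc.op ((G.map dR.op w)⁻¹ * gR)) = 1 := by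
  rw [← mapop_comp, h, mapop_comp, map_mul, map_inv, hu]
  simp

section Fix

variable (G : SimplexCategoryᵒᵖ ⥤ GrpCat) {n' : ℕ} (k : Fin (n'+3))
  (g : ∀ j : Fin (n'+3), j ≠ k → G.obj (op ⦋n'+1⦌))
  (compat : ∀ (j l : Fin (n'+3)) (hj : j ≠ k) (hl : l ≠ k) (m : SimplexCategory)
    (u v : m ⟶ ⦋n'+1⦌), u ≫ δ j = v ≫ δ l → G.map u.op (g j hj) = G.map v.op (g l hl))
  (w : G.obj (op ⦋n'+2⦌))

include compat in
lemma fixlow (r s : ℕ) (hr : r < n'+3) (hs : s < n'+2)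
    (hR : (⟨r, hr⟩ : Fin (n'+3)) ≠ k) (j : Fin (n'+3)) (hj : j ≠ k)
    (hjs : j.1 < s) (hjr : j.1 < r)
    (hDj : G.map (δ j).op w = g j hj) :
    G.map (δ j).op (G.map (σ (⟨s, hs⟩ : Fin (n'+2))).op
      ((G.map (δ (⟨r, hr⟩ : Fin (n'+3))).op w)⁻¹ * g ⟨r, hr⟩ hR)) = 1 := by
  obtain ⟨jv, hjlt⟩ := j
  have hjs' : jv < s := hjs
  have hjr' : jv < r := hjr
  refine vanish G _ w _ _ _ (σ (⟨s-1, by omega⟩ : Fin (n'+1)))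
    (δ (⟨jv, by omega⟩ : Fin (n'+2))) (ds_le jv s hjs hs) ?_
  have hdd := dd (n := n') jv r hjr hr
  rw [← mapop_comp, hdd, mapop_comp, hDj]
  exact (compat ⟨r, hr⟩ ⟨jv, hjlt⟩ hR hj _ _ _ hdd).symm

include compat in
lemma fixhigh (r : ℕ) (hr0 : 0 < r) (hr : r < n'+2)
    (hR : (⟨r, by omega⟩ : Fin (n'+3)) ≠ k) (j : Fin (n'+3)) (hj : j ≠ k)
    (hjr : r < j.1)
    (hDj : G.map (δ j).op w = g j hj) :
    G.map (δ j).op (G.map (σ (⟨r-1, by omega⟩ : Fin (n'+2))).op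
      ((G.map (δ (⟨r, by omega⟩ : Fin (n'+3))).op w)⁻¹ * g ⟨r, by omega⟩ hR)) = 1 := by
  obtain ⟨jv, hjlt⟩ := j
  have hjr' : r < jv := hjr
  have h1 : (r-1) + 1 < jv := by omega
  have hfac : δ (⟨jv, hjlt⟩ : Fin (n'+3)) ≫ σ (⟨r-1, by omega⟩ : Fin (n'+2)) =
      σ (⟨r-1, by omega⟩ : Fin (n'+1)) ≫ δ (⟨jv-1, by omega⟩ : Fin (n'+2)) := by
    have := ds_gt (n := n') jv (r-1) h1 hjlt
    convert this using 3
  refine vanish G _ w _ _ _ _ _ hfac ?_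
  have hdd := dd (n := n') r jv hjr hjlt
  have hdd' : δ (⟨jv-1, by omega⟩ : Fin (n'+2)) ≫ δ (⟨r, by omega⟩ : Fin (n'+3)) =
      δ (⟨r, by omega⟩ : Fin (n'+2)) ≫ δ (⟨jv, hjlt⟩ : Fin (n'+3)) := by
    exact hdd.symm
  rw [← mapop_comp, hdd', mapop_comp, hDj]
  exact (compat _ _ hR hj _ _ _ hdd').symm

end Fix

/- ### Moore's theorem: simplicial groups satisfy the Kan extension condition -/

lemma moore (G : SimplexCategoryᵒᵖ ⥤ GrpCat) (n : ℕ) (k : Fin (n+2))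
    (g : ∀ j : Fin (n+2), j ≠ k → G.obj (op ⦋n⦌))
    (compat : ∀ (j l : Fin (n+2)) (hj : j ≠ k) (hl : l ≠ k) (m : SimplexCategory)
      (u v : m ⟶ ⦋n⦌), u ≫ δ j = v ≫ δ l → G.map u.op (g j hj) = G.map v.op (g l hl)) :
    ∃ w : G.obj (op ⦋n+1⦌), ∀ (j : Fin (n+2)) (hj : j ≠ k), G.map (δ j).op w = g j hj := by
  -- ascending phase: fix faces 0, 1, ..., k-1
  have asc : ∀ r : ℕ, r ≤ k.1 → ∃ w : G.obj (op ⦋n+1⦌),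
      ∀ (j : Fin (n+2)) (hj : j ≠ k), j.1 < r → G.map (δ j).op w = g j hj := by
    intro r hrk
    induction r with
    | zero => exact ⟨1, fun j hj h => absurd h (by omega)⟩
    | succ r ih =>
      obtain ⟨w, hw⟩ := ih (by omega)
      have hrn : r < n + 1 := by omega
      have hR : (⟨r, by omega⟩ : Fin (n+2)) ≠ k := by
        intro h; apply_fun Fin.val at h; simp at h; omega
      refine ⟨w * G.map (σ (⟨r, hrn⟩ : Fin (n+1))).op
        ((G.map (δ (⟨r, by omega⟩ : Fin (n+2))).op w)⁻¹ * g _ hR), ?_⟩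
      intro j hj hjr
      rw [map_mul]
      rcases Nat.lt_or_ge j.1 r with hlt | hge
      · obtain ⟨n', rfl⟩ : ∃ n', n = n' + 1 := ⟨n - 1, by omega⟩
        rw [fixlow G k g compat w r r (by omega) hrn hR j hj hlt hlt (hw j hj hlt), mul_one]
        exact hw j hj hlt
      · obtain ⟨jv, hjlt⟩ := j
        have hge' : r ≤ jv := hge
        have hjr' : jv < r + 1 := hjr
        obtain rfl : jv = r := by omega
        rw [← mapop_comp, ds_self jv hrn]
        simp only [op_id, CategoryTheory.Functor.map_id]
        rw [show (𝟙 (G.obj (op ⦋n⦌))) ((G.map (δ (⟨jv, by omega⟩ : Fin (n+2))).op w)⁻¹ * g _ hR)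
            = (G.map (δ (⟨jv, by omega⟩ : Fin (n+2))).op w)⁻¹ * g _ hR from rfl,
          mul_inv_cancel_left]
  -- descending phase: fix faces n+1, n, ..., k+1, keeping the low ones
  have desc : ∀ t : ℕ, t ≤ n + 1 - k.1 → ∃ w : G.obj (op ⦋n+1⦌),
      (∀ (j : Fin (n+2)) (hj : j ≠ k), j.1 < k.1 → G.map (δ j).op w = g j hj) ∧
      (∀ (j : Fin (n+2)) (hj : j ≠ k), n+2-t ≤ j.1 → G.map (δ j).op w = g j hj) := by
    intro t htk
    induction t with
    | zero =>
      obtain ⟨w, hw⟩ := asc k.1 le_rfl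
      exact ⟨w, fun j hj hjk => hw j hj hjk, fun j hj hjt => absurd hjt (by omega)⟩
    | succ t ih =>
      obtain ⟨w, hwlow, hwhigh⟩ := ih (by omega)
      set r : ℕ := n + 1 - t with hrdef
      have hkr : k.1 < r := by omega
      have hrn : r < n + 2 := by omega
      have hR : (⟨r, hrn⟩ : Fin (n+2)) ≠ k := by
        intro h; apply_fun Fin.val at h; simp at h; omega
      refine ⟨w * G.map (σ (⟨r-1, by omega⟩ : Fin (n+1))).op
        ((G.map (δ (⟨r, hrn⟩ : Fin (n+2))).op w)⁻¹ * g _ hR), ?_, ?_⟩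
      · intro j hj hjk
        rw [map_mul]
        obtain ⟨n', rfl⟩ : ∃ n', n = n' + 1 := ⟨n - 1, by omega⟩
        rw [fixlow G k g compat w r (r-1) hrn (by omega) hR j hj (by omega) (by omega)
          (hwlow j hj hjk), mul_one]
        exact hwlow j hj hjk
      · intro j hj hjt
        rw [map_mul]
        rcases Nat.lt_or_ge r j.1 with hlt | hge
        · obtain ⟨n', rfl⟩ : ∃ n', n = n' + 1 := ⟨n - 1, by omega⟩
          have hDj : G.map (δ j).op w = g j hj := hwhigh j hj (by omega)
          rw [fixhigh G k g compat w r (by omega) (by omega) hR j hj hlt hDj, mul_one]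
          exact hDj
        · obtain ⟨jv, hjlt⟩ := j
          have hge' : jv ≤ r := hge
          have hjt' : n + 2 - (t+1) ≤ jv := hjt
          obtain rfl : jv = r := by omega
          have hid : δ (⟨r, hrn⟩ : Fin (n+2)) ≫ σ (⟨r-1, by omega⟩ : Fin (n+1)) = 𝟙 _ :=
            SimplexCategory.δ_comp_σ_succ' (Fin.ext (by simp; omega))
          rw [← mapop_comp, hid]
          simp only [op_id, CategoryTheory.Functor.map_id]
          rw [show (𝟙 (G.obj (op ⦋n⦌))) ((G.map (δ (⟨r, hrn⟩ : Fin (n+2))).op w)⁻¹ * g _ hR)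
              = (G.map (δ (⟨r, hrn⟩ : Fin (n+2))).op w)⁻¹ * g _ hR from rfl,
            mul_inv_cancel_left]
  obtain ⟨w, hlow, hhigh⟩ := desc (n + 1 - k.1) le_rfl
  refine ⟨w, fun j hj => ?_⟩
  rcases Nat.lt_or_ge j.1 k.1 with h | h
  · exact hlow j hj h
  · refine hhigh j hj ?_
    have : j.1 ≠ k.1 := fun hc => hj (Fin.ext hc)
    omega

/- ### Yoneda / horn bookkeeping -/

lemma yoneda_app {Z : SSet} {N : SimplexCategory} (φ : stdSimplex.obj N ⟶ Z)
    (m : SimplexCategoryᵒᵖ) (s : (stdSimplex.obj N).obj m) :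
    φ.app m s = Z.map (s.down).op (yonedaEquiv φ) := by
  conv_lhs => rw [← (yonedaEquiv (X := Z) (n := N)).symm_apply_apply φ]
  rfl

lemma yoneda_symm_app {Z : SSet} {N : SimplexCategory} (z : Z.obj (op N))
    (m : SimplexCategoryᵒᵖ) (s : (stdSimplex.obj N).obj m) :
    ((yonedaEquiv (X := Z) (n := N)).symm z).app m s = Z.map (s.down).op z := rfl

lemma yoneda_comp {Z W : SSet} {N : SimplexCategory} (φ : stdSimplex.obj N ⟶ Z) (ψ : Z ⟶ W) :
    yonedaEquiv (φ ≫ ψ) = ψ.app (op N) (yonedaEquiv φ) := rfl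

lemma face_down {n : ℕ} (i j : Fin (n+2)) (h : j ≠ i) :
    ((horn.face i j h).1).down = SimplexCategory.δ j := rfl

lemma horn_map_face {n : ℕ} {i : Fin (n+2)} {j l : Fin (n+2)} (hj : j ≠ i) (hl : l ≠ i)
    {m : SimplexCategory} (u v : m ⟶ ⦋n⦌)
    (huv : u ≫ SimplexCategory.δ j = v ≫ SimplexCategory.δ l) :
    (Λ[n+1, i] : SSet).map u.op (horn.face i j hj) = (Λ[n+1, i] : SSet).map v.op (horn.face i l hl) := by
  apply Subtype.ext
  show Δ[n+1].map u.op (horn.face i j hj).1 = Δ[n+1].map v.op (horn.face i l hl).1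
  change stdSimplex.objEquiv.symm (u ≫ SimplexCategory.δ j) =
    stdSimplex.objEquiv.symm (v ≫ SimplexCategory.δ l)
  rw [huv]

/- ### Cancellation for free actions -/

lemma act_cancel {G : SimplexCategoryᵒᵖ ⥤ GrpCat} {X : SSet} (a : SimplicialRightAction G X)
    (hfree : a.IsFree) {n : SimplexCategoryᵒᵖ} {x : X.obj n} {g h : G.obj n}
    (H : a.act n x g = a.act n x h) : g = h := by
  have h0 := congrArg (fun z => a.act n z h⁻¹) H
  simp only [a.act_mul] at h0
  rw [mul_inv_cancel, a.act_one] at h0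
  have h1 := hfree n x (g * h⁻¹) h0
  rwa [mul_inv_eq_one] at h1

end KanFibAux

end KanAux

open SimplexCategory Opposite KanFibAux

/-- If a simplicial group `G` acts freely on the right on a simplicial set `X` and
`q : X → Y` is a quotient map for this action, then `q` is a Kan fibration. -/
theorem kanFibration_of_quotient_free_action (G : SimplexCategoryᵒᵖ ⥤ GrpCat) (X Y : SSet)
    (a : SimplicialRightAction G X) (hfree : a.IsFree)
    (q : X ⟶ Y) (hq : a.IsQuotientMap q) : IsKanFibration q := by
  intro n i
  constructor
  intro f gb sq
  obtain ⟨x₀, hx₀⟩ := hq.1 (op ⦋n+1⦌) (yonedaEquiv gb)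
  -- each horn face lies in the orbit of the corresponding face of `x₀`
  have hface : ∀ (j : Fin (n+2)) (hj : j ≠ i),
      q.app (op ⦋n⦌) (X.map (SimplexCategory.δ j).op x₀) =
        q.app (op ⦋n⦌) (f.app (op ⦋n⦌) (horn.face i j hj)) := by
    intro j hj
    have h1 : q.app (op ⦋n⦌) (f.app (op ⦋n⦌) (horn.face i j hj))
        = ((horn (n+1) i).ι ≫ gb).app (op ⦋n⦌) (horn.face i j hj) := by
      rw [← sq.w]; rfl
    have h2 : ((horn (n+1) i).ι ≫ gb).app (op ⦋n⦌) (horn.face i j hj)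
        = gb.app (op ⦋n⦌) ((horn.face i j hj).1) := rfl
    have h3 : q.app (op ⦋n⦌) (X.map (SimplexCategory.δ j).op x₀)
        = Y.map (SimplexCategory.δ j).op (q.app (op ⦋n+1⦌) x₀) :=
      FunctorToTypes.naturality q (SimplexCategory.δ j).op x₀
    rw [h1, h2, yoneda_app gb, face_down, h3, hx₀]
  have hγ : ∀ (j : Fin (n+2)) (hj : j ≠ i), ∃ γ : G.obj (op ⦋n⦌),
      f.app (op ⦋n⦌) (horn.face i j hj) =
        a.act (op ⦋n⦌) (X.map (SimplexCategory.δ j).op x₀) γ :=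
    fun j hj => (hq.2 (op ⦋n⦌) _ _).mp (hface j hj)
  choose γ hγs using hγ
  -- the `γ`'s are compatible, by freeness
  have compat : ∀ (j l : Fin (n+2)) (hj : j ≠ i) (hl : l ≠ i) (m : SimplexCategory)
      (u v : m ⟶ ⦋n⦌), u ≫ SimplexCategory.δ j = v ≫ SimplexCategory.δ l →
      G.map u.op (γ j hj) = G.map v.op (γ l hl) := by
    intro j l hj hl m u v huv
    have e1 : X.map u.op (f.app (op ⦋n⦌) (horn.face i j hj))
        = a.act (op m) (X.map (u ≫ SimplexCategory.δ j).op x₀) (G.map u.op (γ j hj)) := by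
      rw [hγs j hj, a.act_map, mapop_comp']
    have e2 : X.map v.op (f.app (op ⦋n⦌) (horn.face i l hl))
        = a.act (op m) (X.map (v ≫ SimplexCategory.δ l).op x₀) (G.map v.op (γ l hl)) := by
      rw [hγs l hl, a.act_map, mapop_comp']
    have e3 : X.map u.op (f.app (op ⦋n⦌) (horn.face i j hj))
        = X.map v.op (f.app (op ⦋n⦌) (horn.face i l hl)) := by
      rw [← FunctorToTypes.naturality f u.op, ← FunctorToTypes.naturality f v.op,
        horn_map_face hj hl u v huv]
    rw [← huv] at e2
    exact act_cancel a hfree (e1.symm.trans (e3.trans e2))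
  -- Moore's theorem provides a filler in the simplicial group
  obtain ⟨w, hwf⟩ := moore G n i γ compat
  -- the lift
  refine ⟨⟨⟨(yonedaEquiv (X := X) (n := ⦋n+1⦌)).symm (a.act (op ⦋n+1⦌) x₀ w), ?_, ?_⟩⟩⟩
  · apply horn.hom_ext
    intro j hj
    have h1 : ((horn (n+1) i).ι ≫ (yonedaEquiv (X := X) (n := ⦋n+1⦌)).symm
          (a.act (op ⦋n+1⦌) x₀ w)).app (op ⦋n⦌) (horn.face i j hj)
        = X.map (SimplexCategory.δ j).op (a.act (op ⦋n+1⦌) x₀ w) := rfl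
    rw [h1, a.act_map, hwf j hj, ← hγs j hj]
  · apply (yonedaEquiv (X := Y) (n := ⦋n+1⦌)).injective
    rw [yoneda_comp, Equiv.apply_symm_apply]
    have horb : q.app (op ⦋n+1⦌) (a.act (op ⦋n+1⦌) x₀ w) = q.app (op ⦋n+1⦌) x₀ :=
      ((hq.2 (op ⦋n+1⦌) x₀ _).mpr ⟨w, rfl⟩).symm
    rw [horb, hx₀]
end

section
/- Let G be a simplicial group, H a simplicial subgroup of G (a collection of subgroups Hₙ ≤ Gₙ closed under all simplicial structure maps), and X a simplicial set with a free right G-action. Let q_H : X → Y be a quotient map for the restricted H-action, let q_G : X → Z be a quotient map for the G-action, and let r : Y → Z be a morphism of simplicial sets with r ∘ q_H = q_G. Then r is a Kan fibration. -/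
open CategoryTheory Simplicial SSet

section
open SimplexCategory Opposite

namespace MooreAux

variable (G : SimplexCategoryᵒᵖ ⥤ GrpCat) (H : ∀ n : SimplexCategoryᵒᵖ, Subgroup (G.obj n))

lemma gmap_comp {p q s : SimplexCategory} (f : p ⟶ q) (g : q ⟶ s) (x : G.obj (op s)) :
    G.map (f ≫ g).op x = G.map f.op (G.map g.op x) := by
  rw [op_comp, G.map_comp]; rfl

variable (hH : ∀ {m n : SimplexCategoryᵒᵖ} (α : m ⟶ n), ∀ g ∈ H m, G.map α g ∈ H n)

include hH in
lemma step {m : ℕ} {k : Fin (m + 3)} (g : Fin (m + 3) → G.obj (op ⦋m+1⦌))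
    (compat : ∀ (u v : (⦋m⦌ : SimplexCategory) ⟶ ⦋m+1⦌) (i j : Fin (m + 3)),
      i ≠ k → j ≠ k → u ≫ δ j = v ≫ δ i →
      (G.map u.op (g j))⁻¹ * G.map v.op (g i) ∈ H (op ⦋m⦌))
    (u : G.obj (op ⦋m+2⦌)) (T : Fin (m+3)) (hT : T ≠ k) (aσ : Fin (m+2))
    (j : Fin (m+3)) (hj : j ≠ k) (i x : Fin (m+2)) (c : Fin (m+1))
    (e1 : δ j ≫ σ aσ = σ c ≫ δ i)
    (e2 : δ x ≫ δ j = δ i ≫ δ T)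
    (hyp : (g j)⁻¹ * G.map (δ j).op u ∈ H (op ⦋m+1⦌)) :
    (g j)⁻¹ * G.map (δ j).op
      (u * G.map (σ aσ).op ((G.map (δ T).op u)⁻¹ * g T)) ∈ H (op ⦋m+1⦌) := by
  have hcomp : G.map (δ j).op (G.map (σ aσ).op ((G.map (δ T).op u)⁻¹ * g T))
      = G.map (σ c).op (G.map (δ i).op ((G.map (δ T).op u)⁻¹ * g T)) := by
    rw [← gmap_comp, e1, gmap_comp]
  have hin : G.map (δ i).op (G.map (δ T).op u) = G.map (δ x).op (G.map (δ j).op u) := by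
    rw [← gmap_comp, ← e2, gmap_comp]
  have key : (g j)⁻¹ * G.map (δ j).op
      (u * G.map (σ aσ).op ((G.map (δ T).op u)⁻¹ * g T))
      = ((g j)⁻¹ * G.map (δ j).op u) *
        G.map (σ c).op ((G.map (δ x).op ((g j)⁻¹ * G.map (δ j).op u))⁻¹ *
          ((G.map (δ x).op (g j))⁻¹ * G.map (δ i).op (g T))) := by
    rw [map_mul, hcomp]
    simp only [map_mul, map_inv, hin]
    group
  rw [key]
  exact mul_mem hyp (hH _ _ (mul_mem (inv_mem (hH _ _ hyp))
    (compat (δ x) (δ i) T j hT hj e2)))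

lemma step_self {m : ℕ} (g : Fin (m + 3) → G.obj (op ⦋m+1⦌))
    (u : G.obj (op ⦋m+2⦌)) (T : Fin (m+3)) (aσ : Fin (m+2))
    (haT : δ T ≫ σ aσ = 𝟙 _) :
    (g T)⁻¹ * G.map (δ T).op
      (u * G.map (σ aσ).op ((G.map (δ T).op u)⁻¹ * g T)) ∈ H (op ⦋m+1⦌) := by
  have h1 : G.map (δ T).op (G.map (σ aσ).op ((G.map (δ T).op u)⁻¹ * g T))
      = (G.map (δ T).op u)⁻¹ * g T := by
    rw [← gmap_comp, haT]
    simp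
  have key : (g T)⁻¹ * G.map (δ T).op
      (u * G.map (σ aσ).op ((G.map (δ T).op u)⁻¹ * g T)) = 1 := by
    rw [map_mul, h1]; group
  rw [key]; exact one_mem _

end MooreAux

namespace MooreAux
variable (G : SimplexCategoryᵒᵖ ⥤ GrpCat) (H : ∀ n : SimplexCategoryᵒᵖ, Subgroup (G.obj n))
variable (hH : ∀ {m n : SimplexCategoryᵒᵖ} (α : m ⟶ n), ∀ g ∈ H m, G.map α g ∈ H n)

include hH in
set_option maxHeartbeats 1200000 in
lemma asc {m : ℕ} {k : Fin (m + 3)} (g : Fin (m + 3) → G.obj (op ⦋m+1⦌))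
    (compat : ∀ (u v : (⦋m⦌ : SimplexCategory) ⟶ ⦋m+1⦌) (i j : Fin (m + 3)),
      i ≠ k → j ≠ k → u ≫ δ j = v ≫ δ i →
      (G.map u.op (g j))⁻¹ * G.map v.op (g i) ∈ H (op ⦋m⦌))
    (t : ℕ) (ht : t ≤ k.1) :
    ∃ u : G.obj (op ⦋m+2⦌), ∀ j : Fin (m+3), j.1 < t →
      (g j)⁻¹ * G.map (δ j).op u ∈ H (op ⦋m+1⦌) := by
  induction t with
  | zero => exact ⟨1, fun j hj => absurd hj (Nat.not_lt_zero _)⟩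
  | succ t ih =>
    obtain ⟨u, hu⟩ := ih (by omega)
    have hk2 : k.1 < m + 3 := k.2
    obtain ⟨T, hTdef⟩ : ∃ T : Fin (m+3), T = ⟨t, by omega⟩ := ⟨_, rfl⟩
    have hT : T ≠ k := Fin.ne_of_val_ne (by simp [hTdef]; omega)
    obtain ⟨aσ, haσdef⟩ : ∃ aσ : Fin (m+2), aσ = ⟨t, by omega⟩ := ⟨_, rfl⟩
    have haT : δ T ≫ σ aσ = 𝟙 _ := δ_comp_σ_self' (by apply Fin.ext; simp [hTdef, haσdef])
    refine ⟨u * G.map (σ aσ).op ((G.map (δ T).op u)⁻¹ * g T), ?_⟩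
    intro j hjt
    have hjk : j ≠ k := Fin.ne_of_val_ne (by omega)
    rcases Nat.lt_or_ge j.1 t with hlt | hge
    · have ht1 : 1 ≤ t := by omega
      obtain ⟨i, hidef⟩ : ∃ i : Fin (m+2), i = ⟨j.1, by omega⟩ := ⟨_, rfl⟩
      obtain ⟨c, hcdef⟩ : ∃ c : Fin (m+1), c = ⟨t-1, by omega⟩ := ⟨_, rfl⟩
      obtain ⟨x, hxdef⟩ : ∃ x : Fin (m+2), x = ⟨t-1, by omega⟩ := ⟨_, rfl⟩
      have hji : j = Fin.castSucc i := by apply Fin.ext; simp [hidef]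
      have hac : aσ = Fin.succ c := by apply Fin.ext; simp [hcdef, haσdef]; omega
      have hTx : T = Fin.succ x := by apply Fin.ext; simp [hxdef, hTdef]; omega
      have e1 : δ j ≫ σ aσ = σ c ≫ δ i := by
        rw [hji, hac]
        exact δ_comp_σ_of_le (by rw [Fin.le_def]; simp [hidef, hcdef]; omega)
      have e2 : δ x ≫ δ j = δ i ≫ δ T := by
        rw [hji, hTx]
        exact (δ_comp_δ (by rw [Fin.le_def]; simp [hidef, hxdef]; omega)).symm
      exact step G H hH g compat u T hT aσ j hjk i x c e1 e2 (hu j hlt)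
    · have : j = T := Fin.ext (by simp [hTdef]; omega)
      rw [this]
      exact step_self G H g u T aσ haT

include hH in
set_option maxHeartbeats 1200000 in
lemma desc {m : ℕ} {k : Fin (m + 3)} (g : Fin (m + 3) → G.obj (op ⦋m+1⦌))
    (compat : ∀ (u v : (⦋m⦌ : SimplexCategory) ⟶ ⦋m+1⦌) (i j : Fin (m + 3)),
      i ≠ k → j ≠ k → u ≫ δ j = v ≫ δ i →
      (G.map u.op (g j))⁻¹ * G.map v.op (g i) ∈ H (op ⦋m⦌))
    (s : ℕ) (hs : s + k.1 ≤ m + 2) :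
    ∃ u : G.obj (op ⦋m+2⦌),
      (∀ j : Fin (m+3), j.1 < k.1 → (g j)⁻¹ * G.map (δ j).op u ∈ H (op ⦋m+1⦌)) ∧
      (∀ j : Fin (m+3), m + 2 - s < j.1 → (g j)⁻¹ * G.map (δ j).op u ∈ H (op ⦋m+1⦌)) := by
  induction s with
  | zero =>
    obtain ⟨u, hu⟩ := asc G H hH g compat k.1 le_rfl
    exact ⟨u, fun j hj => hu j hj, fun j hj => absurd j.2 (by omega)⟩
  | succ s ih =>
    obtain ⟨u, hu1, hu2⟩ := ih (by omega)
    have hk2 : k.1 < m + 3 := k.2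
    obtain ⟨t, htdef⟩ : ∃ t : ℕ, t = m + 1 - s := ⟨_, rfl⟩
    have hkt : k.1 ≤ t := by omega
    have htm : t + 1 ≤ m + 2 := by omega
    obtain ⟨T, hTdef⟩ : ∃ T : Fin (m+3), T = ⟨t+1, by omega⟩ := ⟨_, rfl⟩
    have hT : T ≠ k := Fin.ne_of_val_ne (by simp [hTdef]; omega)
    obtain ⟨aσ, haσdef⟩ : ∃ aσ : Fin (m+2), aσ = ⟨t, by omega⟩ := ⟨_, rfl⟩
    have haT : δ T ≫ σ aσ = 𝟙 _ := δ_comp_σ_succ' (by apply Fin.ext; simp [hTdef, haσdef])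
    refine ⟨u * G.map (σ aσ).op ((G.map (δ T).op u)⁻¹ * g T), fun j hj => ?_, fun j hj => ?_⟩
    · -- j.1 < k.1
      have hjk : j ≠ k := Fin.ne_of_val_ne (by omega)
      have ht1 : 1 ≤ t := by omega
      obtain ⟨i, hidef⟩ : ∃ i : Fin (m+2), i = ⟨j.1, by omega⟩ := ⟨_, rfl⟩
      obtain ⟨c, hcdef⟩ : ∃ c : Fin (m+1), c = ⟨t-1, by omega⟩ := ⟨_, rfl⟩
      have hji : j = Fin.castSucc i := by apply Fin.ext; simp [hidef]
      have hac : aσ = Fin.succ c := by apply Fin.ext; simp [hcdef, haσdef]; omega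
      have hTa : T = Fin.succ aσ := by apply Fin.ext; simp [hTdef, haσdef]
      have e1 : δ j ≫ σ aσ = σ c ≫ δ i := by
        rw [hji, hac]
        exact δ_comp_σ_of_le (by rw [Fin.le_def]; simp [hidef, hcdef]; omega)
      have e2 : δ aσ ≫ δ j = δ i ≫ δ T := by
        rw [hji, hTa]
        exact (δ_comp_δ (by rw [Fin.le_def]; simp [hidef, haσdef]; omega)).symm
      exact step G H hH g compat u T hT aσ j hjk i aσ c e1 e2 (hu1 j hj)
    · -- m + 2 - (s+1) < j.1, i.e. t < j.1
      have hjt : t < j.1 := by omega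
      rcases Nat.lt_or_ge (t+1) j.1 with hlt | hge
      · have hjk : j ≠ k := Fin.ne_of_val_ne (by omega)
        have hj3 : j.1 < m + 3 := j.2
        obtain ⟨i, hidef⟩ : ∃ i : Fin (m+2), i = ⟨j.1 - 1, by omega⟩ := ⟨_, rfl⟩
        obtain ⟨c, hcdef⟩ : ∃ c : Fin (m+1), c = ⟨t, by omega⟩ := ⟨_, rfl⟩
        obtain ⟨x, hxdef⟩ : ∃ x : Fin (m+2), x = ⟨t+1, by omega⟩ := ⟨_, rfl⟩
        have hji : j = Fin.succ i := by apply Fin.ext; simp [hidef]; omega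
        have hac : aσ = Fin.castSucc c := by apply Fin.ext; simp [hcdef, haσdef]
        have hTx : T = Fin.castSucc x := by apply Fin.ext; simp [hxdef, hTdef]
        have e1 : δ j ≫ σ aσ = σ c ≫ δ i := by
          rw [hji, hac]
          exact δ_comp_σ_of_gt (by rw [Fin.lt_def]; simp [hidef, hcdef]; omega)
        have e2 : δ x ≫ δ j = δ i ≫ δ T := by
          rw [hji, hTx]
          exact δ_comp_δ (by rw [Fin.le_def]; simp [hidef, hxdef]; omega)
        exact step G H hH g compat u T hT aσ j hjk i x c e1 e2 (hu2 j (by omega))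
      · have : j = T := Fin.ext (by simp [hTdef]; omega)
        rw [this]
        exact step_self G H g u T aσ haT

include hH in
lemma fill {m : ℕ} {k : Fin (m + 3)} (g : Fin (m + 3) → G.obj (op ⦋m+1⦌))
    (compat : ∀ (u v : (⦋m⦌ : SimplexCategory) ⟶ ⦋m+1⦌) (i j : Fin (m + 3)),
      i ≠ k → j ≠ k → u ≫ δ j = v ≫ δ i →
      (G.map u.op (g j))⁻¹ * G.map v.op (g i) ∈ H (op ⦋m⦌)) :
    ∃ w : G.obj (op ⦋m+2⦌), ∀ j : Fin (m+3), j ≠ k →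
      (g j)⁻¹ * G.map (δ j).op w ∈ H (op ⦋m+1⦌) := by
  obtain ⟨u, h1, h2⟩ := desc G H hH g compat (m + 2 - k.1) (by omega)
  refine ⟨u, fun j hj => ?_⟩
  rcases Nat.lt_or_ge j.1 k.1 with h | h
  · exact h1 j h
  · have hne : j.1 ≠ k.1 := fun e => hj (Fin.ext e)
    exact h2 j (by have := k.2; omega)

end MooreAux

end

section
open SimplexCategory Opposite MooreAux

/-- Let `G` be a simplicial group, `H` a simplicial subgroup of `G`, and `X` a simplicial set
with a free right `G`-action.  If `q_H : X → Y` is a quotient map for the restricted `H`-action,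
`q_G : X → Z` is a quotient map for the `G`-action, and `r : Y → Z` satisfies
`r ∘ q_H = q_G`, then `r` is a Kan fibration. -/
theorem kanFibration_of_subgroup_quotient (G : SimplexCategoryᵒᵖ ⥤ GrpCat)
    (H : ∀ n : SimplexCategoryᵒᵖ, Subgroup (G.obj n))
    (hH : ∀ {m n : SimplexCategoryᵒᵖ} (α : m ⟶ n), ∀ g ∈ H m, G.map α g ∈ H n)
    (X Y Z : SSet) (a : SimplicialRightAction G X) (hfree : a.IsFree)
    (qH : X ⟶ Y)
    (hqH_surj : ∀ n : SimplexCategoryᵒᵖ, Function.Surjective (qH.app n))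
    (hqH_rel : ∀ (n : SimplexCategoryᵒᵖ) (x x' : X.obj n),
      qH.app n x = qH.app n x' ↔ ∃ g ∈ H n, x' = a.act n x g)
    (qG : X ⟶ Z)
    (hqG_surj : ∀ n : SimplexCategoryᵒᵖ, Function.Surjective (qG.app n))
    (hqG_rel : ∀ (n : SimplexCategoryᵒᵖ) (x x' : X.obj n),
      qG.app n x = qG.app n x' ↔ ∃ g : G.obj n, x' = a.act n x g)
    (r : Y ⟶ Z) (hr : qH ≫ r = qG) : IsKanFibration r := by
  intro n k
  have moore : ∀ (k : Fin (n+2)) (gg : Fin (n+2) → G.obj (op (SimplexCategory.mk n))),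
      (∀ (p : SimplexCategory) (u v : p ⟶ SimplexCategory.mk n) (i j : Fin (n+2)),
        i ≠ k → j ≠ k → u ≫ SimplexCategory.δ j = v ≫ SimplexCategory.δ i →
        (G.map u.op (gg j))⁻¹ * G.map v.op (gg i) ∈ H (op p)) →
      ∃ w : G.obj (op (SimplexCategory.mk (n+1))), ∀ j : Fin (n+2), j ≠ k →
        (gg j)⁻¹ * G.map (SimplexCategory.δ j).op w ∈ H (op (SimplexCategory.mk n)) := by
    obtain _ | m := n
    · intro k gg _
      have hδσ : ∀ j : Fin 2, SimplexCategory.δ j ≫ SimplexCategory.σ 0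
          = 𝟙 (⦋0⦌ : SimplexCategory) := by
        intro j
        fin_cases j
        · exact SimplexCategory.δ_comp_σ_self' (by apply Fin.ext; rfl)
        · exact SimplexCategory.δ_comp_σ_succ' (by apply Fin.ext; rfl)
      refine ⟨G.map (SimplexCategory.σ 0).op (gg ⟨1 - k.1, by omega⟩), fun j hj => ?_⟩
      have hj0 : j = ⟨1 - k.1, by omega⟩ := by
        apply Fin.ext
        have h1 := Fin.val_ne_of_ne hj
        have h2 := j.2
        have h3 := k.2
        show (j : ℕ) = 1 - (k : ℕ)
        omega
      rw [hj0, ← MooreAux.gmap_comp, hδσ _]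
      have hid : G.map (𝟙 (⦋0⦌ : SimplexCategory)).op (gg ⟨1 - k.1, by omega⟩)
          = gg ⟨1 - k.1, by omega⟩ := by
        simp
      rw [hid, inv_mul_cancel]
      exact one_mem _
    · intro k gg cpt
      exact MooreAux.fill G H hH gg (fun u v i j hik hjk he => cpt _ u v i j hik hjk he)
  constructor
  intro f g' sq
  obtain ⟨z, hz⟩ : ∃ z, z = SSet.yonedaEquiv g' := ⟨_, rfl⟩
  obtain ⟨x, hx⟩ := hqG_surj _ z
  have hyz : ∀ (j : Fin (n+2)) (hj : j ≠ k),
      r.app _ (f.app _ (horn.face k j hj)) = Z.map (SimplexCategory.δ j).op z := by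
    intro j hj
    have h1 : r.app _ (f.app _ (horn.face k j hj))
        = (f ≫ r).app _ (horn.face k j hj) := rfl
    rw [sq.w] at h1
    rw [h1]
    have h2 : g' = (SSet.yonedaEquiv (X := Z)).symm z := by
      rw [hz]; exact ((SSet.yonedaEquiv (X := Z)).symm_apply_apply g').symm
    rw [h2]
    have h3 : ((horn (n+1) k).ι ≫ (SSet.yonedaEquiv (X := Z)).symm z).app _ (horn.face k j hj)
        = Z.map ((stdSimplex.objEquiv.{0})
            ((stdSimplex.objEquiv.{0}).symm (SimplexCategory.δ j))).op z := rfl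
    rw [h3, Equiv.apply_symm_apply]
  choose x' hxy using fun (j : Fin (n+2)) (hj : j ≠ k) =>
    hqH_surj _ (f.app _ (horn.face k j hj))
  have hqc : ∀ (j : Fin (n+2)) (hj : j ≠ k),
      ∃ cc, x' j hj = a.act _ (X.map (SimplexCategory.δ j).op x) cc := by
    intro j hj
    apply (hqG_rel _ _ _).mp
    have n1 : qG.app _ (X.map (SimplexCategory.δ j).op x) = Z.map (SimplexCategory.δ j).op z := by
      rw [← hx]; exact NatTrans.naturality_apply qG _ x
    have n2 : qG.app _ (x' j hj) = r.app _ (f.app _ (horn.face k j hj)) := by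
      rw [← hxy j hj, ← hr]; rfl
    rw [n1, n2, hyz j hj]
  choose c hc using hqc
  obtain ⟨gg, hgg⟩ : ∃ gg : Fin (n+2) → G.obj (op (SimplexCategory.mk n)),
      ∀ (j) (hj : j ≠ k), gg j = c j hj :=
    ⟨fun j => if hj : j = k then 1 else c j hj, fun j hj => dif_neg hj⟩
  have compat : ∀ (p : SimplexCategory) (u v : p ⟶ SimplexCategory.mk n) (i j : Fin (n+2)),
      i ≠ k → j ≠ k → u ≫ SimplexCategory.δ j = v ≫ SimplexCategory.δ i →
      (G.map u.op (gg j))⁻¹ * G.map v.op (gg i) ∈ H (op p) := by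
    intro p u v i j hik hjk he
    have hface : (Λ[n+1, k] : SSet).map u.op (horn.face k j hjk)
        = (Λ[n+1, k] : SSet).map v.op (horn.face k i hik) := by
      apply Subtype.ext
      show stdSimplex.objEquiv.symm (u ≫ SimplexCategory.δ j) = stdSimplex.objEquiv.symm (v ≫ SimplexCategory.δ i)
      rw [he]
    have hYface : Y.map u.op (f.app _ (horn.face k j hjk))
        = Y.map v.op (f.app _ (horn.face k i hik)) := by
      rw [← NatTrans.naturality_apply f u.op, ← NatTrans.naturality_apply f v.op, hface]
    have hqq : qH.app _ (X.map u.op (x' j hjk)) = qH.app _ (X.map v.op (x' i hik)) := by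
      rw [NatTrans.naturality_apply qH u.op, NatTrans.naturality_apply qH v.op,
        hxy, hxy, hYface]
    obtain ⟨h, hmem, hrel⟩ := (hqH_rel _ _ _).mp hqq
    have exj : X.map u.op (x' j hjk)
        = a.act _ (X.map (u ≫ SimplexCategory.δ j).op x) (G.map u.op (gg j)) := by
      rw [hc j hjk, a.act_map, hgg j hjk, op_comp, X.map_comp]
      rfl
    have exi : X.map v.op (x' i hik)
        = a.act _ (X.map (u ≫ SimplexCategory.δ j).op x) (G.map v.op (gg i)) := by
      rw [hc i hik, a.act_map, hgg i hik, he, op_comp, X.map_comp]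
      rfl
    rw [exj, exi, a.act_mul] at hrel
    have hBA : G.map v.op (gg i) * (G.map u.op (gg j) * h)⁻¹ = 1 := by
      apply hfree _ (X.map (u ≫ SimplexCategory.δ j).op x)
      rw [← a.act_mul, hrel, a.act_mul, mul_inv_cancel, a.act_one]
    have hfin : (G.map u.op (gg j))⁻¹ * G.map v.op (gg i) = h := by
      rw [mul_inv_eq_one] at hBA
      rw [hBA]
      group
    rw [hfin]
    exact hmem
  obtain ⟨w, hw⟩ := moore k gg compat
  have hfaces : ∀ (j : Fin (n+2)) (hj : j ≠ k),
      qH.app _ (X.map (SimplexCategory.δ j).op (a.act _ x w)) = f.app _ (horn.face k j hj) := by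
    intro j hj
    rw [← hxy j hj]
    exact ((hqH_rel _ (x' j hj) _).mpr ⟨(gg j)⁻¹ * G.map (SimplexCategory.δ j).op w, hw j hj, by
      rw [a.act_map, hc j hj, a.act_mul, hgg j hj, mul_inv_cancel_left]⟩).symm
  refine ⟨⟨⟨(SSet.yonedaEquiv (X := Y)).symm (qH.app _ (a.act _ x w)), ?_, ?_⟩⟩⟩
  · apply horn.hom_ext
    intro j hj
    have h1 : ((horn (n+1) k).ι ≫
        (SSet.yonedaEquiv (X := Y)).symm (qH.app _ (a.act _ x w))).app _ (horn.face k j hj)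
        = Y.map ((stdSimplex.objEquiv.{0})
            ((stdSimplex.objEquiv.{0}).symm (SimplexCategory.δ j))).op
            (qH.app _ (a.act _ x w)) := rfl
    rw [h1, Equiv.apply_symm_apply, ← NatTrans.naturality_apply qH]
    exact hfaces j hj
  · apply (SSet.yonedaEquiv (X := Z)).injective
    have h2 : SSet.yonedaEquiv (X := Z) ((SSet.yonedaEquiv (X := Y)).symm (qH.app _ (a.act _ x w)) ≫ r)
        = r.app _ (SSet.yonedaEquiv (X := Y) ((SSet.yonedaEquiv (X := Y)).symm (qH.app _ (a.act _ x w)))) := rfl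
    rw [h2, Equiv.apply_symm_apply]
    have h3 : r.app _ (qH.app _ (a.act _ x w)) = qG.app _ (a.act _ x w) := by
      rw [← hr]; rfl
    have h4 : qG.app _ (a.act _ x w) = qG.app _ x := ((hqG_rel _ x _).mpr ⟨w, rfl⟩).symm
    rw [h3, h4, hx, hz]

end
end

section
/- Let G be a simplicial group and H a simplicial subgroup of G (a collection of subgroups Hₙ ≤ Gₙ closed under all simplicial structure maps). Regard G as a simplicial set with the free right H-action given by multiplication, and let q : G → Y be a quotient map for this action. Then q is a Kan fibration, and Y is a Kan complex. -/
open CategoryTheory Simplicial SSet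

/-- The unique morphism from a simplicial set to `Δ[0]`. -/
def SSet.toPt (X : SSet) : X ⟶ Δ[0] where
  app n := TypeCat.ofHom fun _ => SSet.stdSimplex.objMk (OrderHom.const _ 0)
  naturality m n α := by
    ext x
    apply SSet.stdSimplex.objEquiv.injective
    apply Subsingleton.elim

/-- A simplicial set `Y` is a *Kan complex* if the unique morphism `Y ⟶ Δ[0]` is a
Kan fibration. -/
def IsKanComplex (Y : SSet) : Prop :=
  IsKanFibration Y.toPt


namespace KQB
open CategoryTheory Simplicial SSet SimplexCategory Opposite


lemma L1 {m : ℕ} (a b : ℕ) (ha : a < m + 2) (hb : b < m + 3) (hab : a < b) :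
    (δ (⟨a, ha⟩ : Fin (m + 2)) ≫ δ (⟨b, hb⟩ : Fin (m + 3)) : (⦋m⦌ : SimplexCategory) ⟶ ⦋m + 2⦌) =
      δ (⟨b - 1, by omega⟩ : Fin (m + 2)) ≫ δ (⟨a, by omega⟩ : Fin (m + 3)) := by
  have e1 : (⟨b, hb⟩ : Fin (m + 3)) = (⟨b - 1, by omega⟩ : Fin (m + 2)).succ := by
    simp [Fin.ext_iff]; omega
  have e2 : (⟨a, by omega⟩ : Fin (m + 3)) = (⟨a, ha⟩ : Fin (m + 2)).castSucc := by
    simp [Fin.ext_iff]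
  rw [e1, e2]
  exact δ_comp_δ (by simp [Fin.le_def]; omega)

lemma L2 {m : ℕ} (r : ℕ) (hr : r < m + 2) :
    (δ (⟨r, by omega⟩ : Fin (m + 3)) ≫ σ (⟨r, hr⟩ : Fin (m + 2)) :
      (⦋m+1⦌ : SimplexCategory) ⟶ ⦋m + 1⦌) = 𝟙 _ := by
  have e1 : (⟨r, by omega⟩ : Fin (m + 3)) = (⟨r, hr⟩ : Fin (m + 2)).castSucc := by
    simp [Fin.ext_iff]
  rw [e1]; exact δ_comp_σ_self

lemma L2' {m : ℕ} (r : ℕ) (hr : r < m + 3) (hr1 : 1 ≤ r) :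
    (δ (⟨r, hr⟩ : Fin (m + 3)) ≫ σ (⟨r - 1, by omega⟩ : Fin (m + 2)) :
      (⦋m+1⦌ : SimplexCategory) ⟶ ⦋m + 1⦌) = 𝟙 _ := by
  have e1 : (⟨r, hr⟩ : Fin (m + 3)) = (⟨r - 1, by omega⟩ : Fin (m + 2)).succ := by
    simp [Fin.ext_iff]; omega
  rw [e1]; exact δ_comp_σ_succ

lemma L3 {m : ℕ} (j c : ℕ) (hc : c < m + 2) (hj : j < c) :
    (δ (⟨j, by omega⟩ : Fin (m + 3)) ≫ σ (⟨c, hc⟩ : Fin (m + 2)) :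
      (⦋m+1⦌ : SimplexCategory) ⟶ ⦋m + 1⦌) =
      σ (⟨c - 1, by omega⟩ : Fin (m + 1)) ≫ δ (⟨j, by omega⟩ : Fin (m + 2)) := by
  have e1 : (⟨j, by omega⟩ : Fin (m + 3)) = (⟨j, by omega⟩ : Fin (m + 2)).castSucc := by
    simp [Fin.ext_iff]
  have e2 : (⟨c, hc⟩ : Fin (m + 2)) = (⟨c - 1, by omega⟩ : Fin (m + 1)).succ := by
    simp [Fin.ext_iff]; omega
  rw [e1, e2]
  exact δ_comp_σ_of_le (by simp [Fin.le_def]; omega)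

lemma L4 {m : ℕ} (j c : ℕ) (hj : j < m + 3) (hc : c + 1 < j) :
    (δ (⟨j, hj⟩ : Fin (m + 3)) ≫ σ (⟨c, by omega⟩ : Fin (m + 2)) :
      (⦋m+1⦌ : SimplexCategory) ⟶ ⦋m + 1⦌) =
      σ (⟨c, by omega⟩ : Fin (m + 1)) ≫ δ (⟨j - 1, by omega⟩ : Fin (m + 2)) := by
  have e1 : (⟨j, hj⟩ : Fin (m + 3)) = (⟨j - 1, by omega⟩ : Fin (m + 2)).succ := by
    simp [Fin.ext_iff]; omega
  have e2 : (⟨c, by omega⟩ : Fin (m + 2)) = (⟨c, by omega⟩ : Fin (m + 1)).castSucc := by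
    simp [Fin.ext_iff]
  rw [e1, e2]
  exact δ_comp_σ_of_gt (by simp [Fin.lt_def]; omega)

lemma mapc (G : SimplexCategoryᵒᵖ ⥤ GrpCat) {a b c : SimplexCategory} (u : a ⟶ b) (v : b ⟶ c)
    (z : G.obj (op c)) : G.map (u ≫ v).op z = G.map u.op (G.map v.op z) := by
  rw [op_comp, G.map_comp]; rfl

lemma mapid (G : SimplexCategoryᵒᵖ ⥤ GrpCat) {c : SimplexCategory}
    (z : G.obj (op c)) (u : c ⟶ c) (hu : u = 𝟙 c) : G.map u.op z = z := by
  subst hu; rw [op_id, G.map_id]; rfl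

/-- Moore's filling argument: a compatible partial family of `(m+1)`-simplices of a simplicial
group, all lying in a simplicial subgroup `K`, indexed by a set avoiding a pivot `p`, is the
boundary-part of some `(m+2)`-simplex of `K`. -/
theorem fill {G : SimplexCategoryᵒᵖ ⥤ GrpCat} (K : ∀ n : SimplexCategoryᵒᵖ, Subgroup (G.obj n))
    (hK : ∀ {a b : SimplexCategoryᵒᵖ} (α : a ⟶ b), ∀ g ∈ K a, G.map α g ∈ K b)
    (m : ℕ) (p : Fin (m + 3)) (P : Fin (m + 3) → Prop) (hp : ¬ P p)
    (x : Fin (m + 3) → G.obj (op ⦋m + 1⦌))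
    (hx : ∀ j, P j → x j ∈ K (op ⦋m + 1⦌))
    (hcomp : ∀ (a b : ℕ) (ha : a < m + 2) (hb : b < m + 3) (hab : a < b),
      P ⟨a, by omega⟩ → P ⟨b, hb⟩ →
      G.map (δ (⟨a, ha⟩ : Fin (m + 2))).op (x ⟨b, hb⟩)
        = G.map (δ (⟨b - 1, by omega⟩ : Fin (m + 2))).op (x ⟨a, by omega⟩)) :
    ∃ w ∈ K (op ⦋m + 2⦌), ∀ j, P j → G.map (δ j).op w = x j := by
  -- ascending phase
  have asc : ∀ r : ℕ, r ≤ p.val → ∃ w ∈ K (op ⦋m + 2⦌),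
      ∀ j : Fin (m + 3), P j → j.val < r → G.map (δ j).op w = x j := by
    intro r
    induction r with
    | zero => exact fun _ => ⟨1, one_mem _, fun j _ h => absurd h (by omega)⟩
    | succ r ih =>
      intro hr
      obtain ⟨w, hwK, hw⟩ := ih (by omega)
      have hp3 := p.isLt
      have hrm : r < m + 2 := by omega
      by_cases hPr : P ⟨r, by omega⟩
      · -- correction step
        refine ⟨w * (G.map (σ (⟨r, hrm⟩ : Fin (m + 2))).op
              (G.map (δ (⟨r, by omega⟩ : Fin (m + 3))).op w))⁻¹ *
            G.map (σ (⟨r, hrm⟩ : Fin (m + 2))).op (x ⟨r, by omega⟩), ?_, ?_⟩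
        · exact mul_mem (mul_mem hwK (inv_mem (hK _ _ (hK _ _ hwK)))) (hK _ _ (hx _ hPr))
        · rintro ⟨jv, hjv⟩ hj hjr
          replace hjr : jv < r + 1 := hjr
          rw [map_mul, map_mul, map_inv]
          rcases Nat.lt_succ_iff_lt_or_eq.mp hjr with hlt | heq
          · -- j < r : face preserved
            have hds : ∀ z : G.obj (op ⦋m + 1⦌),
                G.map (δ (⟨jv, hjv⟩ : Fin (m + 3))).op (G.map (σ (⟨r, hrm⟩ : Fin (m + 2))).op z)
                = G.map (σ (⟨r - 1, by omega⟩ : Fin (m + 1))).op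
                    (G.map (δ (⟨jv, by omega⟩ : Fin (m + 2))).op z) := by
              intro z
              rw [← mapc, ← mapc, L3 jv r hrm hlt]
            rw [hds, hds]
            have h1 : G.map (δ (⟨jv, by omega⟩ : Fin (m + 2))).op
                (G.map (δ (⟨r, by omega⟩ : Fin (m + 3))).op w)
                = G.map (δ (⟨r - 1, by omega⟩ : Fin (m + 2))).op (x ⟨jv, hjv⟩) := by
              rw [← mapc, L1 jv r (by omega) (by omega) hlt, mapc]
              congr 1
              exact hw ⟨jv, hjv⟩ hj (show jv < r by omega)
            have h2 : G.map (δ (⟨jv, by omega⟩ : Fin (m + 2))).op (x ⟨r, by omega⟩)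
                = G.map (δ (⟨r - 1, by omega⟩ : Fin (m + 2))).op (x ⟨jv, hjv⟩) := by
              exact hcomp jv r (by omega) (by omega) hlt hj hPr
            rw [h1, h2, hw ⟨jv, hjv⟩ hj (show jv < r by omega)]
            group
          · -- j = r : face set
            subst heq
            have hid : ∀ z : G.obj (op ⦋m + 1⦌),
                G.map (δ (⟨jv, hjv⟩ : Fin (m + 3))).op (G.map (σ (⟨jv, hrm⟩ : Fin (m + 2))).op z)
                = z := by
              intro z
              rw [← mapc, mapid _ _ _ (L2 jv hrm)]
            rw [hid, hid]
            group
      · -- no-op step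
        refine ⟨w, hwK, ?_⟩
        rintro ⟨jv, hjv⟩ hj hjr
        replace hjr : jv < r + 1 := hjr
        rcases Nat.lt_succ_iff_lt_or_eq.mp hjr with hlt | heq
        · exact hw _ hj hlt
        · subst heq; exact absurd hj hPr
  -- descending phase
  have desc : ∀ t : ℕ, t ≤ (m + 2) - p.val → ∃ w ∈ K (op ⦋m + 2⦌),
      (∀ j : Fin (m + 3), P j → j.val < p.val → G.map (δ j).op w = x j) ∧
      (∀ j : Fin (m + 3), P j → (m + 2) - t < j.val → G.map (δ j).op w = x j) := by
    intro t
    induction t with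
    | zero =>
      intro _
      obtain ⟨w, hwK, hw⟩ := asc p.val le_rfl
      exact ⟨w, hwK, hw, fun j _ hgt => absurd hgt (by omega)⟩
    | succ t ih =>
      intro ht
      obtain ⟨w, hwK, hwlo, hwhi⟩ := ih (by omega)
      have hp3 := p.isLt
      set r : ℕ := m + 2 - t with hrdef
      have hrp : p.val < r := by omega
      have hr3 : r < m + 3 := by omega
      have hr1 : 1 ≤ r := by omega
      by_cases hPr : P ⟨r, hr3⟩
      · refine ⟨w * (G.map (σ (⟨r - 1, by omega⟩ : Fin (m + 2))).op
              (G.map (δ (⟨r, hr3⟩ : Fin (m + 3))).op w))⁻¹ *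
            G.map (σ (⟨r - 1, by omega⟩ : Fin (m + 2))).op (x ⟨r, hr3⟩), ?_, ?_, ?_⟩
        · exact mul_mem (mul_mem hwK (inv_mem (hK _ _ (hK _ _ hwK)))) (hK _ _ (hx _ hPr))
        · -- low faces preserved
          rintro ⟨jv, hjv⟩ hj hjp
          replace hjp : jv < p.val := hjp
          rw [map_mul, map_mul, map_inv]
          have hjr1 : jv < r - 1 := by omega
          have hds : ∀ z : G.obj (op ⦋m + 1⦌),
              G.map (δ (⟨jv, hjv⟩ : Fin (m + 3))).op
                  (G.map (σ (⟨r - 1, by omega⟩ : Fin (m + 2))).op z)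
              = G.map (σ (⟨r - 1 - 1, by omega⟩ : Fin (m + 1))).op
                  (G.map (δ (⟨jv, by omega⟩ : Fin (m + 2))).op z) := by
            intro z
            rw [← mapc, ← mapc, L3 jv (r - 1) (by omega) hjr1]
          rw [hds, hds]
          have h1 : G.map (δ (⟨jv, by omega⟩ : Fin (m + 2))).op
              (G.map (δ (⟨r, hr3⟩ : Fin (m + 3))).op w)
              = G.map (δ (⟨r - 1, by omega⟩ : Fin (m + 2))).op (x ⟨jv, hjv⟩) := by
            rw [← mapc, L1 jv r (by omega) hr3 (by omega), mapc]
            congr 1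
            exact hwlo ⟨jv, hjv⟩ hj (show jv < p.val by omega)
          have h2 : G.map (δ (⟨jv, by omega⟩ : Fin (m + 2))).op (x ⟨r, hr3⟩)
              = G.map (δ (⟨r - 1, by omega⟩ : Fin (m + 2))).op (x ⟨jv, hjv⟩) :=
            hcomp jv r (by omega) hr3 (by omega) hj hPr
          rw [h1, h2, hwlo ⟨jv, hjv⟩ hj (show jv < p.val by omega)]
          group
        · -- high faces: j > m + 2 - (t+1) = r - 1, i.e. j ≥ r
          rintro ⟨jv, hjv⟩ hj hjgt
          replace hjgt : (m + 2) - (t + 1) < jv := hjgt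
          have hjge : r ≤ jv := by omega
          rcases eq_or_lt_of_le hjge with heq | hlt
          · -- j = r : face set
            have hE : (⟨jv, hjv⟩ : Fin (m + 3)) = ⟨r, hr3⟩ := by simp [Fin.ext_iff]; omega
            rw [hE, map_mul, map_mul, map_inv]
            have hid : ∀ z : G.obj (op ⦋m + 1⦌),
                G.map (δ (⟨r, hr3⟩ : Fin (m + 3))).op
                  (G.map (σ (⟨r - 1, by omega⟩ : Fin (m + 2))).op z) = z := by
              intro z
              rw [← mapc, mapid _ _ _ (L2' r hr3 hr1)]
            rw [hid, hid]
            rw [hE] at hj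
            group
          · -- j > r : face preserved
            rw [map_mul, map_mul, map_inv]
            have hds : ∀ z : G.obj (op ⦋m + 1⦌),
                G.map (δ (⟨jv, hjv⟩ : Fin (m + 3))).op
                    (G.map (σ (⟨r - 1, by omega⟩ : Fin (m + 2))).op z)
                = G.map (σ (⟨r - 1, by omega⟩ : Fin (m + 1))).op
                    (G.map (δ (⟨jv - 1, by omega⟩ : Fin (m + 2))).op z) := by
              intro z
              rw [← mapc, ← mapc, L4 jv (r - 1) hjv (by omega)]
            rw [hds, hds]
            have h1 : G.map (δ (⟨jv - 1, by omega⟩ : Fin (m + 2))).op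
                (G.map (δ (⟨r, hr3⟩ : Fin (m + 3))).op w)
                = G.map (δ (⟨r, by omega⟩ : Fin (m + 2))).op (x ⟨jv, hjv⟩) := by
              rw [← mapc, ← L1 r jv (by omega) hjv hlt, mapc]
              congr 1
              exact hwhi ⟨jv, hjv⟩ hj (show (m + 2) - t < jv by omega)
            have h2 : G.map (δ (⟨jv - 1, by omega⟩ : Fin (m + 2))).op (x ⟨r, hr3⟩)
                = G.map (δ (⟨r, by omega⟩ : Fin (m + 2))).op (x ⟨jv, hjv⟩) :=
              (hcomp r jv (by omega) hjv hlt hPr hj).symm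
            rw [h1, h2, hwhi ⟨jv, hjv⟩ hj (show (m + 2) - t < jv by omega)]
            group
      · refine ⟨w, hwK, hwlo, ?_⟩
        rintro ⟨jv, hjv⟩ hj hjgt
        replace hjgt : (m + 2) - (t + 1) < jv := hjgt
        rcases eq_or_lt_of_le (show r ≤ jv by omega) with heq | hlt
        · exfalso; apply hPr
          have : (⟨jv, hjv⟩ : Fin (m + 3)) = ⟨r, hr3⟩ := by simp [Fin.ext_iff]; omega
          rwa [this] at hj
        · exact hwhi _ hj (show (m + 2) - t < jv by omega)
  obtain ⟨w, hwK, hwlo, hwhi⟩ := desc ((m + 2) - p.val) le_rfl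
  refine ⟨w, hwK, ?_⟩
  rintro ⟨jv, hjv⟩ hj
  rcases lt_trichotomy jv p.val with h | h | h
  · exact hwlo _ hj h
  · exfalso; apply hp
    have : (⟨jv, hjv⟩ : Fin (m + 3)) = p := by simp [Fin.ext_iff]; omega
    rwa [this] at hj
  · exact hwhi _ hj (show (m + 2) - ((m + 2) - p.val) < jv by omega)



lemma smapc (X : SSet) {a b c : SimplexCategory} (u : a ⟶ b) (v : b ⟶ c) (z : X.obj (op c)) :
    X.map (u ≫ v).op z = X.map u.op (X.map v.op z) := by
  rw [op_comp, X.map_comp]; rfl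

lemma horn_map_face {m : ℕ} {i : Fin (m + 3)} (c : Fin (m + 2)) (j : Fin (m + 3)) (hj : j ≠ i) :
    (((Λ[m + 2, i] : SSet).map (δ c).op (horn.face i j hj)) : (Λ[m + 2, i] : SSet).obj (op ⦋m⦌)).1
      = (stdSimplex.objEquiv).symm (δ c ≫ δ j) := by
  show Δ[m + 2].map (δ c).op (horn.face i j hj).1 = _
  rw [stdSimplex.map_apply]
  rfl

lemma horn_compat {X : SSet} {m : ℕ} {i : Fin (m + 3)} (f : (Λ[m + 2, i] : SSet) ⟶ X)
    (a b : ℕ) (ha : a < m + 2) (hb : b < m + 3) (hab : a < b)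
    (hja : (⟨a, by omega⟩ : Fin (m + 3)) ≠ i) (hjb : (⟨b, hb⟩ : Fin (m + 3)) ≠ i) :
    X.map (δ (⟨a, ha⟩ : Fin (m + 2))).op (f.app (op ⦋m + 1⦌) (horn.face i ⟨b, hb⟩ hjb))
      = X.map (δ (⟨b - 1, by omega⟩ : Fin (m + 2))).op
          (f.app (op ⦋m + 1⦌) (horn.face i ⟨a, by omega⟩ hja)) := by
  have n1 := (NatTrans.naturality_apply f (δ (⟨a, ha⟩ : Fin (m + 2))).op) (horn.face i ⟨b, hb⟩ hjb)
  have n2 := (NatTrans.naturality_apply f (δ (⟨b - 1, by omega⟩ : Fin (m + 2))).op)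
    (horn.face i ⟨a, by omega⟩ hja)
  rw [← n1, ← n2]
  refine congrArg (f.app (op ⦋m⦌)) (Subtype.ext ?_)
  rw [horn_map_face, horn_map_face, L1 a b ha hb hab]

lemma horn_comp_lift {X : SSet} {n : ℕ} {k : Fin (n + 2)} (f : (Λ[n + 1, k] : SSet) ⟶ X)
    (w : X.obj (op ⦋n + 1⦌))
    (hw : ∀ (j : Fin (n + 2)) (hj : j ≠ k), X.map (δ j).op w = f.app _ (horn.face k j hj)) :
    (horn (n + 1) k).ι ≫ ((yonedaEquiv (X := X) (n := ⦋n + 1⦌))).symm w = f := by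
  apply horn.hom_ext
  intro j hj
  rw [← hw j hj]
  rfl

lemma symm_comp (X Y : SSet) (n : SimplexCategory) (w : X.obj (op n)) (q : X ⟶ Y) :
    ((yonedaEquiv (X := X) (n := n))).symm w ≫ q = ((yonedaEquiv (X := Y) (n := n))).symm (q.app _ w) := by
  exact SSet.yonedaEquiv_symm_comp w q

lemma bottom_face {Y : SSet} {n : ℕ} (g : Δ[n + 1] ⟶ Y) (j : Fin (n + 2)) :
    g.app (op ⦋n⦌) ((stdSimplex.objEquiv).symm (δ j))
      = Y.map (δ j).op ((yonedaEquiv (X := Y) (n := ⦋n + 1⦌)) g) := by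
  have := SSet.yonedaEquiv_symm_app_objEquiv_symm (yonedaEquiv g) (δ j)
  rwa [Equiv.symm_apply_apply] at this

lemma to_pt_ext (A : SSet) (s t : A ⟶ Δ[0]) : s = t := by
  ext m x

section Main
variable (G : SimplexCategoryᵒᵖ ⥤ GrpCat)
    (H : ∀ n : SimplexCategoryᵒᵖ, Subgroup (G.obj n))
    (hH : ∀ {m n : SimplexCategoryᵒᵖ} (α : m ⟶ n), ∀ g ∈ H m, G.map α g ∈ H n)
    (Y : SSet) (q : (G ⋙ forget GrpCat) ⟶ Y)
    (hsurj : ∀ n : SimplexCategoryᵒᵖ, Function.Surjective (q.app n))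
    (hrel : ∀ (n : SimplexCategoryᵒᵖ) (x x' : G.obj n),
      q.app n x = q.app n x' ↔ ∃ h ∈ H n, x' = x * h)

include hH hsurj hrel in
theorem part1 : ∀ (n : ℕ) (k : Fin (n + 2)), HasLiftingProperty ((horn (n + 1) k).ι) q := by
  intro n k
  constructor
  intro f g sq
  obtain ⟨g₀, hg₀⟩ : ∃ z : G.obj (op ⦋n + 1⦌),
      q.app (op ⦋n + 1⦌) z = (yonedaEquiv (X := Y) (n := ⦋n + 1⦌)) g :=
    hsurj (op ⦋n + 1⦌) ((yonedaEquiv (X := Y) (n := ⦋n + 1⦌)) g)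
  have hqx : ∀ (j : Fin (n + 2)) (hj : j ≠ k),
      q.app (op ⦋n⦌) (f.app (op ⦋n⦌) (horn.face k j hj))
        = Y.map (δ j).op ((yonedaEquiv (X := Y) (n := ⦋n + 1⦌)) g) := fun j hj =>
    (ConcreteCategory.congr_hom (NatTrans.congr_app sq.w (op ⦋n⦌)) (horn.face k j hj)).trans (bottom_face g j)
  have hqd : ∀ j : Fin (n + 2),
      q.app (op ⦋n⦌) (G.map (δ j).op g₀) = Y.map (δ j).op ((yonedaEquiv (X := Y) (n := ⦋n + 1⦌)) g) := fun j =>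
    ((NatTrans.naturality_apply q (δ j).op) g₀).trans (congrArg (Y.map (δ j).op) hg₀)
  have hxH : ∀ (j : Fin (n + 2)) (hj : j ≠ k),
      (G.map (δ j).op g₀)⁻¹ * (show G.obj (op ⦋n⦌) from f.app (op ⦋n⦌) (horn.face k j hj)) ∈ H (op ⦋n⦌) := by
    intro j hj
    obtain ⟨h, hhH, hh⟩ := (hrel (op ⦋n⦌) (G.map (δ j).op g₀)
      (show G.obj (op ⦋n⦌) from f.app (op ⦋n⦌) (horn.face k j hj))).mp
      ((hqd j).trans (hqx j hj).symm)
    rw [hh, inv_mul_cancel_left]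
    exact hhH
  have fillH : ∃ w' ∈ H (op ⦋n + 1⦌), ∀ (j : Fin (n + 2)) (hj : j ≠ k),
      G.map (δ j).op w' = (G.map (δ j).op g₀)⁻¹ * (show G.obj (op ⦋n⦌) from f.app (op ⦋n⦌) (horn.face k j hj)) := by
    cases n with
    | zero =>
      obtain ⟨j, hj⟩ : ∃ j : Fin 2, j ≠ k := by
        refine ⟨⟨1 - k.val, by omega⟩, fun e => ?_⟩
        have hk := k.isLt
        rw [Fin.ext_iff] at e
        replace e : 1 - k.val = k.val := e
        omega
      refine ⟨G.map (σ (0 : Fin 1)).op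
        ((G.map (δ j).op g₀)⁻¹ * (show G.obj (op ⦋0⦌) from f.app (op ⦋0⦌) (horn.face k j hj))), hH _ _ (hxH j hj), ?_⟩
      intro j' hj'
      have e : j' = j := by
        have h1 := k.isLt; have h2 := j.isLt; have h3 := j'.isLt
        replace hj : j.val ≠ k.val := fun e => hj (Fin.ext e)
        replace hj' : j'.val ≠ k.val := fun e => hj' (Fin.ext e)
        exact Fin.ext (by omega)
      subst e
      rw [← mapc, mapid _ _ _ (Subsingleton.elim _ _)]
    | succ m =>
      have hcomp : ∀ (a b : ℕ) (ha : a < m + 2) (hb : b < m + 3) (hab : a < b),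
          (⟨a, by omega⟩ : Fin (m + 3)) ≠ k → (⟨b, hb⟩ : Fin (m + 3)) ≠ k →
          G.map (δ (⟨a, ha⟩ : Fin (m + 2))).op
            ((fun j => if hj : j = k then 1
              else (G.map (δ j).op g₀)⁻¹ *
                (show G.obj (op ⦋m + 1⦌) from f.app (op ⦋m + 1⦌) (horn.face k j hj))) ⟨b, hb⟩)
          = G.map (δ (⟨b - 1, by omega⟩ : Fin (m + 2))).op
            ((fun j => if hj : j = k then 1
              else (G.map (δ j).op g₀)⁻¹ *
                (show G.obj (op ⦋m + 1⦌) from f.app (op ⦋m + 1⦌) (horn.face k j hj)))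
              ⟨a, by omega⟩) := by
        intro a b ha hb hab hPa hPb
        simp only [dif_neg hPa, dif_neg hPb, map_mul, map_inv]
        have e1 : G.map (δ (⟨a, ha⟩ : Fin (m + 2))).op
            (G.map (δ (⟨b, hb⟩ : Fin (m + 3))).op g₀)
            = G.map (δ (⟨b - 1, by omega⟩ : Fin (m + 2))).op
              (G.map (δ (⟨a, by omega⟩ : Fin (m + 3))).op g₀) := by
          rw [← mapc, ← mapc, L1 a b ha hb hab]
        have e2 : G.map (δ (⟨a, ha⟩ : Fin (m + 2))).op
              (f.app (op ⦋m + 1⦌) (horn.face k ⟨b, hb⟩ hPb))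
            = G.map (δ (⟨b - 1, by omega⟩ : Fin (m + 2))).op
              (f.app (op ⦋m + 1⦌) (horn.face k ⟨a, by omega⟩ hPa)) :=
          horn_compat f a b ha hb hab hPa hPb
        rw [e1, e2]
      obtain ⟨w', hw'H, hw'⟩ := fill H (fun α z hz => hH α z hz) m k (fun j => j ≠ k)
        (by simp)
        (fun j => if hj : j = k then 1
          else (G.map (δ j).op g₀)⁻¹ *
            (show G.obj (op ⦋m + 1⦌) from f.app (op ⦋m + 1⦌) (horn.face k j hj)))
        (fun j hj => by simpa only [dif_neg hj] using hxH j hj) hcomp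
      refine ⟨w', hw'H, fun j hj => ?_⟩
      have := hw' j hj
      rwa [dif_neg hj] at this
  obtain ⟨w', hw'H, hw'⟩ := fillH
  have hq : q.app (op ⦋n + 1⦌) (g₀ * w') = (yonedaEquiv (X := Y) (n := ⦋n + 1⦌)) g := by
    rw [← hg₀]
    exact ((hrel _ g₀ (g₀ * w')).mpr ⟨w', hw'H, rfl⟩).symm
  have hw : ∀ (j : Fin (n + 2)) (hj : j ≠ k),
      (G ⋙ forget GrpCat).map (δ j).op (g₀ * w') = f.app (op ⦋n⦌) (horn.face k j hj) := by
    intro j hj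
    show G.map (δ j).op (g₀ * w') = _
    rw [map_mul, hw' j hj, mul_inv_cancel_left]
  exact CommSq.HasLift.mk' ⟨((yonedaEquiv (X := (G ⋙ forget GrpCat)) (n := ⦋n + 1⦌))).symm (g₀ * w'),
    horn_comp_lift f (g₀ * w') hw,
    by rw [symm_comp, hq]; exact Equiv.symm_apply_apply _ g⟩

include hH hsurj hrel in
theorem part2 : ∀ (n : ℕ) (k : Fin (n + 2)), HasLiftingProperty ((horn (n + 1) k).ι) Y.toPt := by
  intro n k
  have qnat : ∀ {a b : SimplexCategoryᵒᵖ} (φ : a ⟶ b) (z : G.obj a),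
      q.app b (G.map φ z) = Y.map φ (q.app a z) := fun φ z => (NatTrans.naturality_apply q φ) z
  constructor
  intro f g sq
  have key : ∃ z : Y.obj (op ⦋n + 1⦌), ∀ (j : Fin (n + 2)) (hj : j ≠ k),
      Y.map (δ j).op z = f.app (op ⦋n⦌) (horn.face k j hj) := by
    match n, k, f with
    | 0, k, f =>
      obtain ⟨j, hj⟩ : ∃ j : Fin 2, j ≠ k := by
        refine ⟨⟨1 - k.val, by omega⟩, fun e => ?_⟩
        have hk := k.isLt
        rw [Fin.ext_iff] at e
        replace e : 1 - k.val = k.val := e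
        omega
      obtain ⟨g', hg'⟩ : ∃ z : G.obj (op ⦋0⦌),
          q.app (op ⦋0⦌) z = f.app (op ⦋0⦌) (horn.face k j hj) :=
        hsurj (op ⦋0⦌) _
      refine ⟨q.app (op ⦋1⦌) (G.map (σ (0 : Fin 1)).op g'), ?_⟩
      intro j' hj'
      have e : j' = j := by
        have h1 := k.isLt; have h2 := j.isLt; have h3 := j'.isLt
        replace hj : j.val ≠ k.val := fun e => hj (Fin.ext e)
        replace hj' : j'.val ≠ k.val := fun e => hj' (Fin.ext e)
        exact Fin.ext (by omega)
      subst e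
      rw [← qnat, ← mapc, mapid _ _ _ (Subsingleton.elim _ _), hg']
    | 1, k, f =>
      obtain ⟨j₁, j₂, hj₁k, hj₂k, hlt, huniq⟩ : ∃ j₁ j₂ : Fin 3, j₁ ≠ k ∧ j₂ ≠ k ∧
          j₁.val < j₂.val ∧ ∀ t : Fin 3, t ≠ k → t = j₁ ∨ t = j₂ := by
        fin_cases k
        · exact ⟨1, 2, by decide, by decide, by decide, by decide⟩
        · exact ⟨0, 2, by decide, by decide, by decide, by decide⟩
        · exact ⟨0, 1, by decide, by decide, by decide, by decide⟩
      have hj₁2 : j₁.val < 2 := by have := j₂.isLt; omega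
      have hj₂3 : j₂.val < 3 := j₂.isLt
      obtain ⟨a, ha⟩ : ∃ z : G.obj (op ⦋1⦌),
          q.app (op ⦋1⦌) z = f.app (op ⦋1⦌) (horn.face k j₁ hj₁k) := hsurj (op ⦋1⦌) _
      obtain ⟨b₀, hb₀⟩ : ∃ z : G.obj (op ⦋1⦌),
          q.app (op ⦋1⦌) z = f.app (op ⦋1⦌) (horn.face k j₂ hj₂k) := hsurj (op ⦋1⦌) _
      -- correct b₀
      have hYcomp : Y.map (δ (⟨j₁.val, hj₁2⟩ : Fin 2)).op
            (f.app (op ⦋1⦌) (horn.face k j₂ hj₂k))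
          = Y.map (δ (⟨j₂.val - 1, by omega⟩ : Fin 2)).op
            (f.app (op ⦋1⦌) (horn.face k j₁ hj₁k)) := by
        exact horn_compat (m := 0) f j₁.val j₂.val hj₁2 hj₂3 hlt hj₁k hj₂k
      obtain ⟨h, hhH, hh⟩ : ∃ h ∈ H (op ⦋0⦌),
          G.map (δ (⟨j₂.val - 1, by omega⟩ : Fin 2)).op a
            = G.map (δ (⟨j₁.val, hj₁2⟩ : Fin 2)).op b₀ * h := by
        apply (hrel _ _ _).mp
        rw [qnat, qnat, ha, hb₀, hYcomp]
      set b : G.obj (op ⦋1⦌) := b₀ * G.map (σ (0 : Fin 1)).op h with hbdef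
      have hqb : q.app (op ⦋1⦌) b = f.app (op ⦋1⦌) (horn.face k j₂ hj₂k) := by
        rw [← hb₀]
        exact ((hrel _ b₀ b).mpr ⟨G.map (σ (0 : Fin 1)).op h, hH _ _ hhH, rfl⟩).symm
      have hab : G.map (δ (⟨j₁.val, hj₁2⟩ : Fin 2)).op b
          = G.map (δ (⟨j₂.val - 1, by omega⟩ : Fin 2)).op a := by
        rw [hbdef, map_mul, ← mapc, mapid _ _ _ (Subsingleton.elim _ _), hh]
      -- Moore fill in G
      have hcomp2 : ∀ (a' b' : ℕ) (ha' : a' < 2) (hb' : b' < 3) (hab' : a' < b'),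
          (⟨a', by omega⟩ : Fin 3) ≠ k → (⟨b', hb'⟩ : Fin 3) ≠ k →
          G.map (δ (⟨a', ha'⟩ : Fin 2)).op
            ((fun t => if t = j₁ then a else if t = j₂ then b else 1) ⟨b', hb'⟩)
          = G.map (δ (⟨b' - 1, by omega⟩ : Fin 2)).op
            ((fun t => if t = j₁ then a else if t = j₂ then b else 1) ⟨a', by omega⟩) := by
        intro a' b' ha' hb' hab' hPa hPb
        rcases huniq ⟨a', by omega⟩ hPa with h1 | h1 <;>
          rcases huniq ⟨b', hb'⟩ hPb with h2 | h2
        · exfalso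
          have e1 : a' = j₁.val := congrArg Fin.val h1
          have e2 : b' = j₁.val := congrArg Fin.val h2
          omega
        · simp only [h1, h2]
          rw [if_neg (show ¬ j₂ = j₁ from fun e => by rw [e] at hlt; omega)]
          have e1 : a' = j₁.val := congrArg Fin.val h1
          have e2 : b' = j₂.val := congrArg Fin.val h2
          subst e1; subst e2
          exact hab
        · exfalso
          have e1 : a' = j₂.val := congrArg Fin.val h1
          have e2 : b' = j₁.val := congrArg Fin.val h2
          omega
        · exfalso
          have e1 : a' = j₂.val := congrArg Fin.val h1
          have e2 : b' = j₂.val := congrArg Fin.val h2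
          omega
      obtain ⟨w, -, hw⟩ := fill (G := G) (fun _ => ⊤) (fun _ _ _ => trivial) 0 k
        (fun t => t ≠ k) (by simp)
        (fun t => if t = j₁ then a else if t = j₂ then b else 1)
        (fun _ _ => trivial) hcomp2
      refine ⟨q.app (op ⦋2⦌) w, ?_⟩
      intro j hj
      rw [← qnat, hw j hj]
      rcases huniq j hj with e | e <;> subst e
      · rw [if_pos rfl, ha]
      · rw [if_neg (fun e => by rw [e] at hlt; omega), if_pos rfl, hqb]
    | (m + 2), k, f =>
      -- Step A: lift the horn from `Y` to `G`, by induction on the number of faces lifted.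
      have main : ∀ J : ℕ, ∃ v : Fin (m + 4) → G.obj (op ⦋m + 2⦌),
          (∀ (j : Fin (m + 4)) (hj : j ≠ k), j.val < J →
            q.app (op ⦋m + 2⦌) (v j) = f.app (op ⦋m + 2⦌) (horn.face k j hj)) ∧
          (∀ (a b : ℕ) (ha : a < m + 3) (hb : b < m + 4), a < b → b < J →
            a ≠ k.val → b ≠ k.val →
            G.map (δ (⟨a, ha⟩ : Fin (m + 3))).op (v ⟨b, hb⟩)
              = G.map (δ (⟨b - 1, by omega⟩ : Fin (m + 3))).op (v ⟨a, by omega⟩)) := by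
        intro J
        induction J with
        | zero => exact ⟨fun _ => 1, fun j hj h => absurd h (by omega),
            fun a b ha hb hab h => absurd h (by omega)⟩
        | succ J ih =>
          obtain ⟨v, hv1, hv2⟩ := ih
          by_cases hJ : J < m + 4 ∧ J ≠ k.val
          case neg =>
            refine ⟨v, ?_, ?_⟩
            · intro j hj hjJ
              replace hjJ : j.val < J + 1 := hjJ
              refine hv1 j hj ?_
              have hjlt := j.isLt
              rcases Nat.lt_succ_iff_lt_or_eq.mp hjJ with h | h
              · exact h
              · exfalso
                rcases not_and_or.mp hJ with h' | h'
                · omega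
                · push_neg at h'
                  exact hj (Fin.ext (by omega))
            · intro a b ha hb hab hbJ hak hbk
              refine hv2 a b ha hb hab ?_ hak hbk
              rcases Nat.lt_succ_iff_lt_or_eq.mp hbJ with h | h
              · exact h
              · exfalso
                rcases not_and_or.mp hJ with h' | h' <;> omega
          case pos =>
            obtain ⟨hJ4, hJk⟩ := hJ
            have hjJ : (⟨J, hJ4⟩ : Fin (m + 4)) ≠ k := fun e => hJk (congrArg Fin.val e)
            obtain ⟨g₁, hg₁⟩ : ∃ z : G.obj (op ⦋m + 2⦌),
                q.app (op ⦋m + 2⦌) z = f.app (op ⦋m + 2⦌) (horn.face k ⟨J, hJ4⟩ hjJ) :=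
              hsurj (op ⦋m + 2⦌) _
            -- the corrections, in `H`
            have hhex : ∀ (i : Fin (m + 3)), i.val < J → i.val ≠ k.val →
                ∃ h ∈ H (op ⦋m + 1⦌),
                G.map (δ (⟨J - 1, by omega⟩ : Fin (m + 3))).op (v ⟨i.val, by omega⟩)
                  = G.map (δ i).op g₁ * h := by
              intro i hiJ hik
              apply (hrel _ _ _).mp
              rw [qnat, qnat, hg₁,
                hv1 ⟨i.val, by omega⟩ (fun e => hik (congrArg Fin.val e)) hiJ]
              exact horn_compat (m := m + 1) f i.val J i.isLt hJ4 hiJ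
                (fun e => hik (congrArg Fin.val e)) hjJ
            have hcorrH : ∀ (i : Fin (m + 3)), i.val < J ∧ i.val ≠ k.val →
                (G.map (δ i).op g₁)⁻¹ *
                  G.map (δ (⟨J - 1, by omega⟩ : Fin (m + 3))).op (v ⟨i.val, by omega⟩)
                  ∈ H (op ⦋m + 1⦌) := by
              intro i hi
              obtain ⟨h, hhH, hh⟩ := hhex i hi.1 hi.2
              rw [hh, inv_mul_cancel_left]
              exact hhH
            have hcorrcomp : ∀ (a b : ℕ) (ha : a < m + 2) (hb : b < m + 3) (hab : a < b),
                ((⟨a, by omega⟩ : Fin (m + 3)).val < J ∧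
                  (⟨a, by omega⟩ : Fin (m + 3)).val ≠ k.val) →
                ((⟨b, hb⟩ : Fin (m + 3)).val < J ∧ (⟨b, hb⟩ : Fin (m + 3)).val ≠ k.val) →
                G.map (δ (⟨a, ha⟩ : Fin (m + 2))).op
                  ((fun i => (G.map (δ i).op g₁)⁻¹ *
                    G.map (δ (⟨J - 1, by omega⟩ : Fin (m + 3))).op (v ⟨i.val, by omega⟩))
                    ⟨b, hb⟩)
                  = G.map (δ (⟨b - 1, by omega⟩ : Fin (m + 2))).op
                  ((fun i => (G.map (δ i).op g₁)⁻¹ *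
                    G.map (δ (⟨J - 1, by omega⟩ : Fin (m + 3))).op (v ⟨i.val, by omega⟩))
                    ⟨a, by omega⟩) := by
              intro a b ha hb hab hPa hPb
              replace hPa : a < J ∧ a ≠ k.val := hPa
              replace hPb : b < J ∧ b ≠ k.val := hPb
              simp only [map_mul, map_inv]
              have e1 : G.map (δ (⟨a, ha⟩ : Fin (m + 2))).op
                  (G.map (δ (⟨b, hb⟩ : Fin (m + 3))).op g₁)
                  = G.map (δ (⟨b - 1, by omega⟩ : Fin (m + 2))).op
                    (G.map (δ (⟨a, by omega⟩ : Fin (m + 3))).op g₁) := by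
                rw [← mapc, ← mapc, L1 a b ha hb hab]
              have e2 : G.map (δ (⟨a, ha⟩ : Fin (m + 2))).op
                  (G.map (δ (⟨J - 1, by omega⟩ : Fin (m + 3))).op (v ⟨b, by omega⟩))
                  = G.map (δ (⟨J - 1 - 1, by omega⟩ : Fin (m + 2))).op
                    (G.map (δ (⟨b - 1, by omega⟩ : Fin (m + 3))).op (v ⟨a, by omega⟩)) := by
                rw [← mapc, L1 a (J - 1) ha (by omega) (by omega), mapc]
                congr 1
                exact hv2 a b (by omega) (by omega) hab (by omega) hPa.2 hPb.2
              have e3 : G.map (δ (⟨b - 1, by omega⟩ : Fin (m + 2))).op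
                  (G.map (δ (⟨J - 1, by omega⟩ : Fin (m + 3))).op (v ⟨a, by omega⟩))
                  = G.map (δ (⟨J - 1 - 1, by omega⟩ : Fin (m + 2))).op
                    (G.map (δ (⟨b - 1, by omega⟩ : Fin (m + 3))).op (v ⟨a, by omega⟩)) := by
                rw [← mapc, L1 (b - 1) (J - 1) (by omega) (by omega) (by omega), mapc]
              rw [e1, e2, e3]
            obtain ⟨p', hp'⟩ : ∃ p' : Fin (m + 3), ¬ (p'.val < J ∧ p'.val ≠ k.val) := by
              by_cases hk3 : k.val < m + 3
              · exact ⟨⟨k.val, hk3⟩, fun h => h.2 rfl⟩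
              · have hk4 := k.isLt
                exact ⟨⟨J, by omega⟩, fun h => lt_irrefl J h.1⟩
            obtain ⟨η, hηH, hη⟩ := fill H (fun α z hz => hH α z hz) m p'
              (fun i => i.val < J ∧ i.val ≠ k.val) hp'
              (fun i => (G.map (δ i).op g₁)⁻¹ *
                G.map (δ (⟨J - 1, by omega⟩ : Fin (m + 3))).op (v ⟨i.val, by omega⟩))
              hcorrH hcorrcomp
            refine ⟨fun t => if t = ⟨J, hJ4⟩ then g₁ * η else v t, ?_, ?_⟩
            · intro j hj hjJ1
              replace hjJ1 : j.val < J + 1 := hjJ1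
              beta_reduce
              by_cases e : j = ⟨J, hJ4⟩
              · subst e
                rw [if_pos rfl, ← hg₁]
                exact ((hrel _ g₁ (g₁ * η)).mpr ⟨η, hηH, rfl⟩).symm
              · rw [if_neg e]
                exact hv1 j hj
                  ((Nat.lt_succ_iff_lt_or_eq.mp hjJ1).resolve_right (fun h => e (Fin.ext h)))
            · intro a b ha hb hab hbJ1 hak hbk
              beta_reduce
              have haJ : (⟨a, by omega⟩ : Fin (m + 4)) ≠ ⟨J, hJ4⟩ := by
                intro e
                have := congrArg Fin.val e
                simp only at this
                omega
              rcases Nat.lt_succ_iff_lt_or_eq.mp hbJ1 with hbJ | hbJ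
              · have hbne : (⟨b, hb⟩ : Fin (m + 4)) ≠ ⟨J, hJ4⟩ := by
                  intro e
                  have := congrArg Fin.val e
                  simp only at this
                  omega
                rw [if_neg hbne, if_neg haJ]
                exact hv2 a b ha hb hab hbJ hak hbk
              · have hbeq : (⟨b, hb⟩ : Fin (m + 4)) = ⟨J, hJ4⟩ := Fin.ext hbJ
                have eidx : (⟨b - 1, (by omega : b - 1 < m + 3)⟩ : Fin (m + 3))
                    = ⟨J - 1, by omega⟩ := Fin.ext (show b - 1 = J - 1 by omega)
                rw [if_pos hbeq, if_neg haJ, eidx, map_mul,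
                  hη ⟨a, by omega⟩ ⟨(by omega : a < J), hak⟩, mul_inv_cancel_left]
      obtain ⟨v, hv1, hv2⟩ := main (m + 4)
      have hcompG : ∀ (a b : ℕ) (ha : a < m + 3) (hb : b < m + 4) (hab : a < b),
          (⟨a, by omega⟩ : Fin (m + 4)) ≠ k → (⟨b, hb⟩ : Fin (m + 4)) ≠ k →
          G.map (δ (⟨a, ha⟩ : Fin (m + 3))).op (v ⟨b, hb⟩)
            = G.map (δ (⟨b - 1, by omega⟩ : Fin (m + 3))).op (v ⟨a, by omega⟩) := by
        intro a b ha hb hab hPa hPb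
        exact hv2 a b ha hb hab hb (fun e => hPa (Fin.ext e)) (fun e => hPb (Fin.ext e))
      obtain ⟨w, -, hw⟩ := fill (G := G) (fun _ => ⊤) (fun _ _ _ => trivial) (m + 1) k
        (fun t => t ≠ k) (by simp) v (fun _ _ => trivial) hcompG
      refine ⟨q.app (op ⦋m + 3⦌) w, ?_⟩
      intro j hj
      rw [← qnat, hw j hj]
      exact hv1 j hj j.isLt
  obtain ⟨z, hz⟩ := key
  exact CommSq.HasLift.mk' ⟨((yonedaEquiv (X := Y) (n := ⦋n + 1⦌))).symm z,
    horn_comp_lift f z hz, to_pt_ext _ _ _⟩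

end Main
end KQB

/-- Let `G` be a simplicial group, `H` a simplicial subgroup, and regard `G` as a simplicial
set equipped with the free right `H`-action given by multiplication.  If `q : G → Y` is a
quotient map for this action, then `q` is a Kan fibration and `Y` is a Kan complex. -/


theorem kanFibration_quotient_by_subgroup (G : SimplexCategoryᵒᵖ ⥤ GrpCat)
    (H : ∀ n : SimplexCategoryᵒᵖ, Subgroup (G.obj n))
    (hH : ∀ {m n : SimplexCategoryᵒᵖ} (α : m ⟶ n), ∀ g ∈ H m, G.map α g ∈ H n)
    (Y : SSet) (q : (G ⋙ forget GrpCat) ⟶ Y)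
    (hsurj : ∀ n : SimplexCategoryᵒᵖ, Function.Surjective (q.app n))
    (hrel : ∀ (n : SimplexCategoryᵒᵖ) (x x' : G.obj n),
      q.app n x = q.app n x' ↔ ∃ h ∈ H n, x' = x * h) :
    IsKanFibration q ∧ IsKanComplex Y :=
  ⟨KQB.part1 G H (fun α g hg => hH α g hg) Y q hsurj hrel,
   KQB.part2 G H (fun α g hg => hH α g hg) Y q hsurj hrel⟩
end

section
/- Let R be a commutative ring and (M, φ) an inner product space over R. Then the map p ↦ range(p) is a bijection from the set of R-linear endomorphisms p of M satisfying p ∘ p = p and φ(p x, y) = φ(x, p y) for all x, y ∈ M, onto the set of submodules N ≤ M to which φ restricts nondegenerately. -/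
/-- A symmetric bilinear form `φ` on `M` *restricts nondegenerately* to a submodule `N ≤ M`
if the map `N → Hom_R(N, R)`, `n ↦ φ(−, n)|_N`, is bijective. -/
def RestrictsNondeg {R M : Type*} [CommRing R] [AddCommGroup M] [Module R M]
    (φ : M →ₗ[R] M →ₗ[R] R) (N : Submodule R M) : Prop :=
  Function.Bijective fun n : N => (φ.flip (n : M)).domRestrict N

section Aux

variable {R M : Type*} [CommRing R] [AddCommGroup M] [Module R M]
variable (φ : M →ₗ[R] M →ₗ[R] R) (N : Submodule R M)

/-- `m ↦ φ(-, m)|_N` as a linear map. -/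
noncomputable def restrMap : M →ₗ[R] (N →ₗ[R] R) :=
  (LinearMap.lcomp R R N.subtype).comp φ.flip

/-- `n ↦ φ(-, n)|_N` on `N` as a linear map. -/
noncomputable def PhiN : N →ₗ[R] (N →ₗ[R] R) := (restrMap φ N).comp N.subtype

lemma restrMap_apply (m : M) (x : N) : restrMap φ N m x = φ x m := rfl

lemma phiN_bij_of_restrictsNondeg (h : RestrictsNondeg φ N) :
    Function.Bijective (PhiN φ N) := h

/-- The orthogonal projection onto `N`, given that `φ` restricts nondegenerately to `N`. -/
noncomputable def projOf (h : Function.Bijective (PhiN φ N)) : Module.End R M :=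
  N.subtype ∘ₗ (LinearEquiv.ofBijective (PhiN φ N) h).symm.toLinearMap ∘ₗ restrMap φ N

lemma projOf_mem (h : Function.Bijective (PhiN φ N)) (m : M) : projOf φ N h m ∈ N :=
  ((LinearEquiv.ofBijective (PhiN φ N) h).symm (restrMap φ N m)).2

lemma projOf_key (h : Function.Bijective (PhiN φ N)) (m : M) (x : N) :
    φ x (projOf φ N h m) = φ x m := by
  have : PhiN φ N ((LinearEquiv.ofBijective (PhiN φ N) h).symm (restrMap φ N m))
      = restrMap φ N m := (LinearEquiv.ofBijective (PhiN φ N) h).apply_symm_apply _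
  exact congrFun (congrArg (fun f => f.toFun) this) x

lemma projOf_of_mem (h : Function.Bijective (PhiN φ N)) {n : M} (hn : n ∈ N) :
    projOf φ N h n = n := by
  have : (LinearEquiv.ofBijective (PhiN φ N) h).symm (restrMap φ N n) = ⟨n, hn⟩ := by
    rw [LinearEquiv.symm_apply_eq]
    rfl
  simpa [projOf] using congrArg (Subtype.val) this

end Aux

/-- Let `(M, φ)` be an inner product space over a commutative ring `R`.  The assignment
`p ↦ range p` is a bijection from the set of `R`-linear endomorphisms `p` of `M` with
`p ∘ p = p` and `φ(p x, y) = φ(x, p y)` onto the set of submodules of `M` to which `φ`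
restricts nondegenerately. -/
theorem bijOn_range_of_selfAdjoint_idempotents {R M : Type*} [CommRing R] [AddCommGroup M]
    [Module R M] [Module.Finite R M] [Module.Projective R M]
    (φ : M →ₗ[R] M →ₗ[R] R) (hsymm : ∀ x y : M, φ x y = φ y x)
    (hnd : Function.Bijective fun m : M => φ.flip m) :
    Set.BijOn (fun p : Module.End R M => LinearMap.range p)
      {p : Module.End R M | p ∘ₗ p = p ∧ ∀ x y : M, φ (p x) y = φ x (p y)}
      {N : Submodule R M | RestrictsNondeg φ N} := by
  -- for an idempotent p, elements of the range are fixed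
  have fix : ∀ p : Module.End R M, p ∘ₗ p = p → ∀ z ∈ LinearMap.range p, p z = z := by
    rintro p hp z ⟨w, rfl⟩
    exact DFunLike.congr_fun hp w
  have flip_inj : ∀ a b : M, (∀ y, φ y a = φ y b) → a = b := by
    intro a b hab
    apply hnd.injective
    ext y
    exact hab y
  refine ⟨?_, ?_, ?_⟩
  · -- MapsTo: range of a self-adjoint idempotent is a nondegenerate submodule
    rintro p ⟨hp, hadj⟩
    set N := LinearMap.range p with hN
    constructor
    · -- injective
      intro n₁ n₂ h12
      ext
      apply flip_inj
      intro m
      have e1 : φ m (n₁ : M) = φ m (n₂ : M) := by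
        rw [← fix p hp _ n₁.2, ← fix p hp _ n₂.2, ← hadj, ← hadj]
        exact congrFun (congrArg (fun f => f.toFun) h12) ⟨p m, LinearMap.mem_range_self p m⟩
      exact e1
    · -- surjective
      intro f
      obtain ⟨m, hm⟩ := hnd.surjective
        (f ∘ₗ LinearMap.codRestrict N p fun m => LinearMap.mem_range_self p m)
      refine ⟨⟨p m, LinearMap.mem_range_self p m⟩, ?_⟩
      have hpp : ∀ z, p (p z) = p z := fun z => DFunLike.congr_fun hp z
      ext x
      have h1 : φ (x : M) (p m) = φ (p (x : M)) m := by
        rw [hsymm (x : M) (p m), hadj m (x : M), hsymm m (p (x : M))]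
      have h2 : φ (p (x : M)) m =
          (f ∘ₗ LinearMap.codRestrict N p fun m => LinearMap.mem_range_self p m) (p x) :=
        congrFun (congrArg (fun f => f.toFun) hm) (p x)
      have h3 : (⟨p (p (x : M)), LinearMap.mem_range_self p _⟩ : N) = x :=
        Subtype.ext (show p (p (x : M)) = (x : M) by rw [hpp, fix p hp _ x.2])
      calc φ (x : M) (p m) = φ (p (x : M)) m := h1
        _ = f ⟨p (p (x : M)), LinearMap.mem_range_self p _⟩ := h2
        _ = f x := congrArg f h3
  · -- InjOn
    rintro p ⟨hp, hpadj⟩ q ⟨hq, hqadj⟩ hpq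
    have hpq' : LinearMap.range p = LinearMap.range q := hpq
    ext x
    apply flip_inj
    intro y
    rw [hsymm y (p x), hsymm y (q x)]
    have hqp : q (p x) = p x := fix q hq _ (by rw [← hpq']; exact LinearMap.mem_range_self p x)
    have hpqy : ∀ z, p (q z) = q z := fun z =>
      fix p hp _ (by rw [hpq']; exact LinearMap.mem_range_self q z)
    calc φ (p x) y = φ (q (p x)) y := by rw [hqp]
      _ = φ (p x) (q y) := hqadj _ _
      _ = φ x (p (q y)) := hpadj _ _
      _ = φ x (q y) := by rw [hpqy]
      _ = φ (q x) y := (hqadj _ _).symm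
  · -- SurjOn
    rintro N hN
    have h : Function.Bijective (PhiN φ N) := phiN_bij_of_restrictsNondeg φ N hN
    set p := projOf φ N h with hpdef
    have hmem : ∀ m, p m ∈ N := projOf_mem φ N h
    have hkey : ∀ (m : M) (x : N), φ (x : M) (p m) = φ (x : M) m := projOf_key φ N h
    have hfixN : ∀ {n : M}, n ∈ N → p n = n := fun hn => projOf_of_mem φ N h hn
    have hidem : p ∘ₗ p = p := by
      ext m
      exact hfixN (hmem m)
    have hadj : ∀ x y : M, φ (p x) y = φ x (p y) := by
      intro x y
      have h1 : φ (p x) (p y) = φ (p x) y := hkey y ⟨p x, hmem x⟩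
      have h2 : φ (p y) (p x) = φ (p y) x := hkey x ⟨p y, hmem y⟩
      rw [← h1, hsymm (p x) (p y), h2, hsymm (p y) x]
    refine ⟨p, ⟨hidem, hadj⟩, ?_⟩
    apply le_antisymm
    · rintro z ⟨w, rfl⟩
      exact hmem w
    · intro n hn
      exact ⟨n, hfixN hn⟩
end

section
/- Let R be a commutative ring and (M, φ) an inner product space over R. If p is an R-linear endomorphism of M with p ∘ p = p and φ(p x, y) = φ(x, p y) for all x, y ∈ M, then φ restricts nondegenerately to the submodule range(p). -/
/-- Let `(M, φ)` be an inner product space over a commutative ring `R`.  If `p` is an `R`-linear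
endomorphism of `M` with `p ∘ p = p` and `φ(p x, y) = φ(x, p y)` for all `x, y`, then `φ`
restricts nondegenerately to the submodule `range p`. -/
theorem restrictsNondeg_range_of_selfAdjoint_idempotent {R M : Type*} [CommRing R]
    [AddCommGroup M] [Module R M] [Module.Finite R M] [Module.Projective R M]
    (φ : M →ₗ[R] M →ₗ[R] R) (hsymm : ∀ x y : M, φ x y = φ y x)
    (hnd : Function.Bijective fun m : M => φ.flip m)
    (p : Module.End R M) (hp : p ∘ₗ p = p)
    (hadj : ∀ x y : M, φ (p x) y = φ x (p y)) :
    RestrictsNondeg φ (LinearMap.range p) := by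
  have hpfix : ∀ x : M, x ∈ LinearMap.range p → p x = x := by
    rintro _ ⟨y, rfl⟩
    exact congrFun (congrArg DFunLike.coe hp) y
  constructor
  · rintro ⟨a, ha⟩ ⟨b, hb⟩ hab
    have key : ∀ c : M, φ c a = φ c b := by
      intro c
      have h := congrFun (congrArg DFunLike.coe hab)
        ⟨p c, LinearMap.mem_range_self p c⟩
      simp only [LinearMap.domRestrict_apply, LinearMap.flip_apply] at h
      calc φ c a = φ (p c) a := by
              rw [hadj, hpfix a ha]
        _ = φ (p c) b := h
        _ = φ c b := by rw [hadj, hpfix b hb]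
    have hflip : φ.flip a = φ.flip b := by
      ext c; simpa using key c
    exact Subtype.ext (hnd.1 hflip)
  · intro f
    obtain ⟨m, hm⟩ := hnd.2
      (f ∘ₗ p.codRestrict (LinearMap.range p) (fun x => LinearMap.mem_range_self p x))
    refine ⟨⟨p m, LinearMap.mem_range_self p m⟩, ?_⟩
    ext ⟨x, hx⟩
    have h := congrFun (congrArg DFunLike.coe hm) x
    simp only [LinearMap.comp_apply, LinearMap.codRestrict_apply, LinearMap.flip_apply] at h
    simp only [LinearMap.domRestrict_apply, LinearMap.flip_apply]
    calc φ x (p m) = φ (p x) m := (hadj x m).symm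
      _ = φ x m := by rw [hpfix x hx]
      _ = f ⟨p x, _⟩ := h
      _ = f ⟨x, hx⟩ := congrArg f (Subtype.ext (hpfix x hx))
end

section
/- Let R be a local ring in which 2 is a unit and in which every unit is a square. Let M be a finite free R-module and φ a nondegenerate symmetric bilinear form on M. Then M admits an orthonormal basis for φ, i.e. a basis (e₁, …, eₙ) with φ(eᵢ, eⱼ) = 1 if i = j and φ(eᵢ, eⱼ) = 0 if i ≠ j. Consequently, two finite free R-modules with nondegenerate symmetric bilinear forms are isometric if and only if they have the same rank. -/
universe u v

theorem aux_ortho (R : Type u) [CommRing R] [IsLocalRing R]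
    (h2 : IsUnit (2 : R)) (hsq : ∀ u : R, IsUnit u → IsSquare u) :
    ∀ (n : ℕ) (M : Type v) [AddCommGroup M] [Module R M] [Module.Finite R M] [Module.Free R M]
      (φ : M →ₗ[R] M →ₗ[R] R), (∀ x y : M, φ x y = φ y x) → Function.Bijective ⇑φ →
      Module.finrank R M = n →
      ∃ b : Module.Basis (Fin n) R M, ∀ i j : Fin n, φ (b i) (b j) = if i = j then 1 else 0 := by
  intro n
  induction n with
  | zero =>
    intro M _ _ _ _ φ hsymm hbij hrk
    exact ⟨(Module.finBasis R M).reindex (finCongr hrk), fun i j => i.elim0⟩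
  | succ n IH =>
    intro M _ _ _ _ φ hsymm hbij hrk
    -- Step 1: find x with φ x x a unit
    have hx : ∃ x : M, IsUnit (φ x x) := by
      by_contra hcon
      push_neg at hcon
      have hmem : ∀ x : M, φ x x ∈ IsLocalRing.maximalIdeal R := fun x => hcon x
      have hall : ∀ x y : M, φ x y ∈ IsLocalRing.maximalIdeal R := by
        intro x y
        have h1 : 2 * φ x y = φ (x + y) (x + y) - φ x x - φ y y := by
          simp only [map_add, LinearMap.add_apply]
          rw [hsymm y x]; ring
        obtain ⟨u, hu⟩ := h2
        have : φ x y = ↑u⁻¹ * (2 * φ x y) := by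
          rw [← mul_assoc, ← hu, Units.inv_mul, one_mul]
        rw [this, h1]
        exact Ideal.mul_mem_left _ _ (Ideal.sub_mem _ (Ideal.sub_mem _ (hmem _) (hmem _)) (hmem _))
      -- contradiction with surjectivity
      set c := (Module.finBasis R M).reindex (finCongr hrk) with hc
      obtain ⟨m, hm⟩ := hbij.2 (c.coord 0)
      have h1 : φ m (c 0) = 1 := by rw [hm]; simp
      have : (1 : R) ∈ IsLocalRing.maximalIdeal R := h1 ▸ hall m (c 0)
      exact (IsLocalRing.maximalIdeal.isMaximal R).ne_top (Ideal.eq_top_of_isUnit_mem _ this isUnit_one)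
    obtain ⟨x, hux⟩ := hx
    obtain ⟨v, hv⟩ := hsq _ hux
    have huv : IsUnit v := isUnit_of_mul_isUnit_left (hv ▸ hux)
    obtain ⟨w, hw⟩ := huv
    set e : M := (↑w⁻¹ : R) • x with he
    have he1 : φ e e = 1 := by
      rw [he]
      simp only [map_smul, LinearMap.smul_apply, smul_eq_mul]
      rw [hv, ← hw]
      calc (↑w⁻¹ : R) * (↑w⁻¹ * (↑w * ↑w)) = (↑w⁻¹ * ↑w) * (↑w⁻¹ * ↑w) := by ring
        _ = 1 := by rw [Units.inv_mul, one_mul]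
    -- the orthogonal complement of e
    set W : Submodule R M := LinearMap.ker (φ e) with hW
    have hmemW : ∀ m : M, m ∈ W ↔ φ e m = 0 := fun m => Iff.rfl
    -- projection
    set π : M →ₗ[R] M := LinearMap.id - (φ e).smulRight e with hπ
    have hπ_apply : ∀ m : M, π m = m - φ e m • e := fun m => rfl
    have hπ_mem : ∀ m : M, π m ∈ W := by
      intro m
      rw [hmemW, hπ_apply]
      simp [he1]
    set πW : M →ₗ[R] W := π.codRestrict W hπ_mem with hπW
    have hπW_apply : ∀ m : M, (πW m : M) = m - φ e m • e := fun m => rfl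
    have hπw : ∀ w' : W, πW (w' : M) = w' := by
      intro w'
      ext
      rw [hπW_apply, (hmemW _).mp w'.2, zero_smul, sub_zero]
    -- linear equivalence M ≃ R × W
    set f : M →ₗ[R] R × W := (φ e).prod πW with hf
    set g : R × W →ₗ[R] M := (LinearMap.fst R R W).smulRight e + W.subtype.comp (LinearMap.snd R R W)
      with hg
    have hgf : ∀ m : M, g (f m) = m := by
      intro m
      simp only [hf, hg, LinearMap.add_apply, LinearMap.smulRight_apply, LinearMap.fst_apply,
        LinearMap.prod_apply, Function.prod, LinearMap.comp_apply, LinearMap.snd_apply,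
        Submodule.coe_subtype]
      rw [hπW_apply]
      abel
    have hfg : ∀ p : R × W, f (g p) = p := by
      rintro ⟨r, w'⟩
      have hgp : g (r, w') = r • e + ↑w' := by
        simp [hg]
      have hfp : ∀ m : M, f m = (φ e m, πW m) := fun m => rfl
      rw [show ((r, w') : R × W) = (r, w') from rfl, hgp, hfp]
      have h1 : φ e (r • e + ↑w') = r := by
        rw [map_add, map_smul, smul_eq_mul, he1, mul_one, (hmemW _).mp w'.2, add_zero]
      have h2 : πW (r • e + ↑w') = w' := by
        rw [map_add, map_smul, hπw]
        have hπe : πW e = 0 := by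
          ext; rw [hπW_apply, he1, one_smul, sub_self]; rfl
        rw [hπe, smul_zero, zero_add]
      exact Prod.ext h1 h2
    set E : M ≃ₗ[R] R × W := LinearEquiv.ofLinear f g (by ext p <;> simp [hfg])
      (by ext m; simp [hgf]) with hE
    -- W is finite free
    have : Module.Finite R (R × W) := Module.Finite.equiv E
    have instWfin : Module.Finite R W := Module.Finite.of_surjective (LinearMap.snd R R W)
      Prod.snd_surjective
    have instWproj : Module.Projective R W := Module.Projective.of_split W.subtype πW
      (by ext w'; simp [hπw])
    have : Module.FinitePresentation R W := Module.finitePresentation_of_projective R W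
    have instWfree : Module.Free R W := Module.free_of_flat_of_isLocalRing
    -- finrank
    have hrkW : Module.finrank R W = n := by
      have h1 : Module.finrank R M = Module.finrank R (R × W) := E.finrank_eq
      rw [hrk, Module.finrank_prod, Module.finrank_self] at h1
      omega
    -- restricted form
    set ψ : W →ₗ[R] W →ₗ[R] R := φ.compl₁₂ W.subtype W.subtype with hψ
    have hψ_apply : ∀ a b : W, ψ a b = φ a b := fun a b => rfl
    have hψsymm : ∀ a b : W, ψ a b = ψ b a := fun a b => hsymm _ _
    have hψbij : Function.Bijective ⇑ψ := by
      constructor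
      · intro a b hab
        have hab' : ∀ c : W, φ (a : M) c = φ (b : M) c := fun c =>
          congrArg (fun t => (t : W →ₗ[R] R) c) hab
        have : φ (a : M) = φ (b : M) := by
          ext m
          have hm : m = (πW m : M) + φ e m • e := by rw [hπW_apply]; abel
          have ha : φ (a : M) e = 0 := by rw [hsymm]; exact (hmemW _).mp a.2
          have hb : φ (b : M) e = 0 := by rw [hsymm]; exact (hmemW _).mp b.2
          have ham : φ (a : M) m = φ (a : M) (πW m) + φ e m * φ (a : M) e := by
            conv_lhs => rw [hm]
            rw [map_add, map_smul, smul_eq_mul]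
          have hbm : φ (b : M) m = φ (b : M) (πW m) + φ e m * φ (b : M) e := by
            conv_lhs => rw [hm]
            rw [map_add, map_smul, smul_eq_mul]
          rw [ham, hbm, hab' (πW m), ha, hb]
        exact Subtype.ext (hbij.1 this)
      · intro F
        obtain ⟨m, hm⟩ := hbij.2 (F.comp πW)
        have hmW : m ∈ W := by
          rw [hmemW, ← hsymm]
          have := congrArg (fun t => (t : M →ₗ[R] R) e) hm
          simp only [LinearMap.comp_apply] at this
          rw [this]
          have : πW e = 0 := by ext; rw [hπW_apply, he1, one_smul, sub_self]; rfl
          rw [this, map_zero]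
        refine ⟨⟨m, hmW⟩, ?_⟩
        ext w'
        rw [hψ_apply]
        have := congrArg (fun t => (t : M →ₗ[R] R) (w' : M)) hm
        simp only [LinearMap.comp_apply] at this
        rw [this, hπw]
    obtain ⟨c, hc⟩ := IH W ψ hψsymm hψbij hrkW
    -- assemble basis of M
    set b0 : Module.Basis (Fin 1 ⊕ Fin n) R M := ((Module.Basis.singleton (Fin 1) R).prod c).map E.symm with hb0
    have hb0inl : ∀ i : Fin 1, b0 (Sum.inl i) = e := by
      intro i
      have h1 : b0 (Sum.inl i) = E.symm ((1 : R), (0 : W)) := by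
        simp [hb0, Module.Basis.prod_apply, Module.Basis.singleton_apply]
      have h2 : E.symm ((1 : R), (0 : W)) = g ((1 : R), (0 : W)) := rfl
      rw [h1, h2, hg]
      simp
    have hb0inr : ∀ j : Fin n, b0 (Sum.inr j) = (c j : M) := by
      intro j
      have h1 : b0 (Sum.inr j) = E.symm ((0 : R), c j) := by
        simp [hb0, Module.Basis.prod_apply, Function.comp_apply]
      have h2 : E.symm ((0 : R), c j) = g ((0 : R), c j) := rfl
      rw [h1, h2, hg]
      simp
    have hb0ortho : ∀ s t : Fin 1 ⊕ Fin n, φ (b0 s) (b0 t) = if s = t then 1 else 0 := by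
      rintro (i | i) (j | j)
      · rw [hb0inl, hb0inl, he1]
        simp [Subsingleton.elim i j]
      · rw [hb0inl, hb0inr, (hmemW _).mp (c j).2]
        simp
      · rw [hb0inr, hb0inl, hsymm, (hmemW _).mp (c i).2]
        simp
      · rw [hb0inr, hb0inr, ← hψ_apply, hc]
        simp
    set κ : (Fin 1 ⊕ Fin n) ≃ Fin (n + 1) := finSumFinEquiv.trans (finCongr (Nat.add_comm 1 n))
      with hκ
    refine ⟨b0.reindex κ, fun i j => ?_⟩
    rw [Module.Basis.reindex_apply, Module.Basis.reindex_apply, hb0ortho]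
    exact if_congr (by simp [Equiv.symm_apply_eq]) rfl rfl

theorem key_flip {R : Type*} [CommRing R] {N : Type*} [AddCommGroup N] [Module R N]
    (ψ : N →ₗ[R] N →ₗ[R] R) (hs : ∀ x y : N, ψ x y = ψ y x)
    (hb : Function.Bijective (fun m : N => ψ.flip m)) : Function.Bijective ⇑ψ := by
  have : (fun m : N => ψ.flip m) = ⇑ψ := by
    funext m; ext x; exact hs x m
  rwa [this] at hb

/-- Let `R` be a local ring in which `2` is a unit and in which every unit is a square, and let
`(M, φ)` be a finite free `R`-module with a nondegenerate symmetric bilinear form.  Then `M`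
admits an orthonormal basis for `φ`; consequently, two finite free `R`-modules with
nondegenerate symmetric bilinear forms are isometric if and only if they have the same rank. -/
theorem exists_orthonormal_basis_and_isometric_iff_finrank_eq
    (R : Type*) [CommRing R] [IsLocalRing R]
    (h2 : IsUnit (2 : R)) (hsq : ∀ u : R, IsUnit u → IsSquare u)
    (M : Type*) [AddCommGroup M] [Module R M] [Module.Finite R M] [Module.Free R M]
    (φ : M →ₗ[R] M →ₗ[R] R) (hsymm : ∀ x y : M, φ x y = φ y x)
    (hnd : Function.Bijective fun m : M => φ.flip m) :
    (∃ (n : ℕ) (b : Module.Basis (Fin n) R M),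
      ∀ i j : Fin n, φ (b i) (b j) = if i = j then 1 else 0) ∧
    ∀ (M' : Type*) [AddCommGroup M'] [Module R M'] [Module.Finite R M'] [Module.Free R M']
      (φ' : M' →ₗ[R] M' →ₗ[R] R), (∀ x y : M', φ' x y = φ' y x) →
      Function.Bijective (fun m : M' => φ'.flip m) →
      ((∃ e : M ≃ₗ[R] M', ∀ x y : M, φ' (e x) (e y) = φ x y) ↔
        Module.finrank R M = Module.finrank R M') := by
  obtain ⟨b, hb⟩ := aux_ortho R h2 hsq (Module.finrank R M) M φ hsymm (key_flip φ hsymm hnd) rfl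
  refine ⟨⟨Module.finrank R M, b, hb⟩, ?_⟩
  intro M' _ _ _ _ φ' hsymm' hnd'
  constructor
  · rintro ⟨e, -⟩
    exact e.finrank_eq
  · intro hrk
    obtain ⟨b', hb'⟩ := aux_ortho R h2 hsq (Module.finrank R M) M' φ' hsymm'
      (key_flip φ' hsymm' hnd') hrk.symm
    set e : M ≃ₗ[R] M' := b.equiv b' (Equiv.refl _) with he
    refine ⟨e, ?_⟩
    have : φ'.compl₁₂ (e : M →ₗ[R] M') (e : M →ₗ[R] M') = φ := by
      apply b.ext; intro i
      apply b.ext; intro j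
      simp only [LinearMap.compl₁₂_apply, LinearEquiv.coe_coe, he, Module.Basis.equiv_apply,
        Equiv.refl_apply]
      rw [hb, hb']
    intro x y
    have := congrArg (fun t => (t : M →ₗ[R] M →ₗ[R] R) x y) this
    simpa using this
end

section
/- Let R be a commutative ring, n ≥ 1, and h an invertible n × n matrix over R. Then the invertible 2n × 2n block diagonal matrix with diagonal blocks h and h⁻¹ is a product of elementary matrices, i.e. of transvection matrices of the form 1 + c·Eᵢⱼ with i ≠ j. -/
open Matrix

section Aux

variable {R : Type*} [CommRing R] {n : ℕ}

lemma stdBasisMatrix_inl_inr (i j : Fin n) (c : R) :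
    Matrix.single (Sum.inl i : Fin n ⊕ Fin n) (Sum.inr j : Fin n ⊕ Fin n) c =
      fromBlocks 0 (Matrix.single i j c) 0 0 := by
  ext x y
  cases x <;> cases y <;> simp [Matrix.single, fromBlocks]

lemma stdBasisMatrix_inr_inl (i j : Fin n) (c : R) :
    Matrix.single (Sum.inr i : Fin n ⊕ Fin n) (Sum.inl j : Fin n ⊕ Fin n) c =
      fromBlocks 0 0 (Matrix.single i j c) 0 := by
  ext x y
  cases x <;> cases y <;> simp [Matrix.single, fromBlocks]

lemma transvection_inl_inr (i j : Fin n) (c : R) :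
    transvection (Sum.inl i : Fin n ⊕ Fin n) (Sum.inr j) c =
      fromBlocks 1 (Matrix.single i j c) 0 1 := by
  have h1 : (1 : Matrix (Fin n ⊕ Fin n) (Fin n ⊕ Fin n) R) = fromBlocks 1 0 0 1 :=
    fromBlocks_one.symm
  rw [transvection, stdBasisMatrix_inl_inr, h1, fromBlocks_add]
  congr 1 <;> simp

lemma transvection_inr_inl (i j : Fin n) (c : R) :
    transvection (Sum.inr i : Fin n ⊕ Fin n) (Sum.inl j) c =
      fromBlocks 1 0 (Matrix.single i j c) 1 := by
  have h1 : (1 : Matrix (Fin n ⊕ Fin n) (Fin n ⊕ Fin n) R) = fromBlocks 1 0 0 1 :=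
    fromBlocks_one.symm
  rw [transvection, stdBasisMatrix_inr_inl, h1, fromBlocks_add]
  congr 1 <;> simp

lemma upper_list (A : Matrix (Fin n) (Fin n) R) (l : List (Fin n × Fin n)) :
    ((l.map fun p => Matrix.TransvectionStruct.toMatrix
        (⟨Sum.inl p.1, Sum.inr p.2, by simp, A p.1 p.2⟩ :
          Matrix.TransvectionStruct (Fin n ⊕ Fin n) R))).prod =
      fromBlocks 1 (l.map fun p => Matrix.single p.1 p.2 (A p.1 p.2)).sum 0 1 := by
  induction l with
  | nil => simp [← fromBlocks_one]
  | cons p l ih =>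
      rw [List.map_cons, List.prod_cons, List.map_cons, List.sum_cons, ih,
        Matrix.TransvectionStruct.toMatrix_mk, transvection_inl_inr, fromBlocks_multiply]
      simp [add_comm]

lemma lower_list (A : Matrix (Fin n) (Fin n) R) (l : List (Fin n × Fin n)) :
    ((l.map fun p => Matrix.TransvectionStruct.toMatrix
        (⟨Sum.inr p.1, Sum.inl p.2, by simp, A p.1 p.2⟩ :
          Matrix.TransvectionStruct (Fin n ⊕ Fin n) R))).prod =
      fromBlocks 1 0 (l.map fun p => Matrix.single p.1 p.2 (A p.1 p.2)).sum 1 := by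
  induction l with
  | nil => simp [← fromBlocks_one]
  | cons p l ih =>
      rw [List.map_cons, List.prod_cons, List.map_cons, List.sum_cons, ih,
        Matrix.TransvectionStruct.toMatrix_mk, transvection_inr_inl, fromBlocks_multiply]
      simp [add_comm]

lemma sum_stdBasis (A : Matrix (Fin n) (Fin n) R) :
    ((Finset.univ : Finset (Fin n × Fin n)).toList.map
      fun p => Matrix.single p.1 p.2 (A p.1 p.2)).sum = A := by
  rw [Finset.sum_map_toList, Fintype.sum_prod_type]
  exact (matrix_eq_sum_single A).symm

lemma upper (A : Matrix (Fin n) (Fin n) R) :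
    ∃ L : List (Matrix.TransvectionStruct (Fin n ⊕ Fin n) R),
      fromBlocks 1 A 0 1 = (L.map Matrix.TransvectionStruct.toMatrix).prod := by
  refine ⟨(Finset.univ : Finset (Fin n × Fin n)).toList.map
    fun p => ⟨Sum.inl p.1, Sum.inr p.2, by simp, A p.1 p.2⟩, ?_⟩
  rw [List.map_map]
  rw [show (Matrix.TransvectionStruct.toMatrix ∘ fun p : Fin n × Fin n =>
    (⟨Sum.inl p.1, Sum.inr p.2, by simp, A p.1 p.2⟩ :
      Matrix.TransvectionStruct (Fin n ⊕ Fin n) R)) = fun p => Matrix.TransvectionStruct.toMatrix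
      (⟨Sum.inl p.1, Sum.inr p.2, by simp, A p.1 p.2⟩ :
      Matrix.TransvectionStruct (Fin n ⊕ Fin n) R) from rfl]
  rw [upper_list, sum_stdBasis]

lemma lower (A : Matrix (Fin n) (Fin n) R) :
    ∃ L : List (Matrix.TransvectionStruct (Fin n ⊕ Fin n) R),
      fromBlocks 1 0 A 1 = (L.map Matrix.TransvectionStruct.toMatrix).prod := by
  refine ⟨(Finset.univ : Finset (Fin n × Fin n)).toList.map
    fun p => ⟨Sum.inr p.1, Sum.inl p.2, by simp, A p.1 p.2⟩, ?_⟩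
  rw [List.map_map]
  rw [show (Matrix.TransvectionStruct.toMatrix ∘ fun p : Fin n × Fin n =>
    (⟨Sum.inr p.1, Sum.inl p.2, by simp, A p.1 p.2⟩ :
      Matrix.TransvectionStruct (Fin n ⊕ Fin n) R)) = fun p => Matrix.TransvectionStruct.toMatrix
      (⟨Sum.inr p.1, Sum.inl p.2, by simp, A p.1 p.2⟩ :
      Matrix.TransvectionStruct (Fin n ⊕ Fin n) R) from rfl]
  rw [lower_list, sum_stdBasis]

end Aux

/-- Let `R` be a commutative ring, `n ≥ 1`, and `h` an invertible `n × n` matrix over `R`.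
Then the invertible `2n × 2n` block diagonal matrix with diagonal blocks `h` and `h⁻¹` is a
product of elementary (transvection) matrices. -/
theorem fromBlocks_inv_eq_prod_transvections {R : Type*} [CommRing R] {n : ℕ} (hn : 1 ≤ n)
    (h : Matrix (Fin n) (Fin n) R) (hh : IsUnit h) :
    ∃ L : List (Matrix.TransvectionStruct (Fin n ⊕ Fin n) R),
      Matrix.fromBlocks h 0 0 h⁻¹ = (L.map Matrix.TransvectionStruct.toMatrix).prod := by
  have hdet : IsUnit h.det := (Matrix.isUnit_iff_isUnit_det h).mp hh
  have h1 : h * h⁻¹ = 1 := Matrix.mul_nonsing_inv h hdet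
  have h2 : h⁻¹ * h = 1 := Matrix.nonsing_inv_mul h hdet
  obtain ⟨L1, hL1⟩ := upper (R := R) (n := n) h
  obtain ⟨L2, hL2⟩ := lower (R := R) (n := n) (-h⁻¹)
  obtain ⟨L3, hL3⟩ := upper (R := R) (n := n) h
  obtain ⟨L4, hL4⟩ := upper (R := R) (n := n) (-1)
  obtain ⟨L5, hL5⟩ := lower (R := R) (n := n) 1
  obtain ⟨L6, hL6⟩ := upper (R := R) (n := n) (-1)
  refine ⟨L1 ++ L2 ++ L3 ++ L4 ++ L5 ++ L6, ?_⟩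
  simp only [List.map_append, List.prod_append, ← hL1, ← hL2, ← hL3, ← hL4, ← hL5, ← hL6]
  simp only [fromBlocks_multiply]
  rw [show (h : Matrix (Fin n) (Fin n) R) * -h⁻¹ = -1 by rw [mul_neg, h1]]
  simp [h1, h2, Matrix.mul_one, Matrix.one_mul]
end

section
/- Let R be a commutative ring in which 2 is a unit, let M be a finitely generated projective R-module, and let φ be a symmetric bilinear form on M such that the adjoint map M → Hom_R(M, R) is bijective. If N ≤ M is a submodule to which φ restricts nondegenerately, then N is a finitely generated projective R-module and the adjoint map N^⊥ → Hom_R(N^⊥, R) of the restriction of φ to the orthogonal complement N^⊥ = {x ∈ M : φ(x, n) = 0 for all n ∈ N} is bijective; that is, the orthogonal complement of a nondegenerate subspace of an inner product space is again an inner product space. -/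
/-- The orthogonal complement `N^⊥ = {x ∈ M | φ(x, n) = 0 for all n ∈ N}` of a submodule `N`
with respect to a bilinear form `φ`. -/
def orthComplement {R M : Type*} [CommRing R] [AddCommGroup M] [Module R M]
    (φ : M →ₗ[R] M →ₗ[R] R) (N : Submodule R M) : Submodule R M where
  carrier := {x : M | ∀ n ∈ N, φ x n = 0}
  zero_mem' := by intro n hn; simp
  add_mem' := by
    intro a b ha hb n hn
    simp [ha n hn, hb n hn]
  smul_mem' := by
    intro c a ha n hn
    simp [ha n hn]

/-- Let `R` be a commutative ring with `2` a unit and `(M, φ)` an inner product space over `R`.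
If `N ≤ M` is a submodule to which `φ` restricts nondegenerately, then `N` is a finitely
generated projective `R`-module and `φ` restricts nondegenerately to the orthogonal
complement `N^⊥`; that is, the orthogonal complement of a nondegenerate subspace of an inner
product space is again an inner product space. -/
theorem orthComplement_of_nondegenerate_is_inner_product_space
    {R M : Type*} [CommRing R] [AddCommGroup M] [Module R M]
    (h2 : IsUnit (2 : R)) [Module.Finite R M] [Module.Projective R M]
    (φ : M →ₗ[R] M →ₗ[R] R) (hsymm : ∀ x y : M, φ x y = φ y x)
    (hnd : Function.Bijective fun m : M => φ.flip m)
    (N : Submodule R M) (hN : RestrictsNondeg φ N) :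
    Module.Finite R N ∧ Module.Projective R N ∧ RestrictsNondeg φ (orthComplement φ N) := by
  set W := orthComplement φ N with hW
  -- A : the adjoint on N, as a linear map
  let A : N →ₗ[R] (N →ₗ[R] R) :=
    { toFun := fun n => (φ.flip (n : M)).domRestrict N
      map_add' := by intro a b; ext x; simp
      map_smul' := by intro c a; ext x; simp }
  have hA : Function.Bijective A := hN
  let eA : N ≃ₗ[R] (N →ₗ[R] R) := LinearEquiv.ofBijective A hA
  -- restriction of functionals φ(−, m) to N
  let Ares : M →ₗ[R] (N →ₗ[R] R) :=
    { toFun := fun m => (φ.flip m).domRestrict N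
      map_add' := by intro a b; ext x; simp
      map_smul' := by intro c a; ext x; simp }
  let π : M →ₗ[R] N := eA.symm.toLinearMap ∘ₗ Ares
  have hAπ : ∀ m, A (π m) = Ares m := by
    intro m
    show eA (eA.symm (Ares m)) = Ares m
    exact eA.apply_symm_apply _
  have hπ : ∀ m (n : N), φ n (π m) = φ n m := by
    intro m n
    have := LinearMap.congr_fun (hAπ m) n
    simpa [A, Ares] using this
  have hπN : ∀ n : N, π (n : M) = n := by
    intro n
    apply hA.1
    rw [hAπ]
    rfl
  -- x - π x ∈ W
  have hsub : ∀ m : M, (m - (π m : M)) ∈ W := by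
    intro m n hn
    have h : (φ n) (π m : M) = (φ n) m := hπ m ⟨n, hn⟩
    simp only [map_sub, LinearMap.sub_apply]
    rw [hsymm m n, hsymm ((π m : M)) n, h, sub_self]
  have hfin : Module.Finite R N :=
    Module.Finite.of_surjective π (fun n => ⟨n, hπN n⟩)
  have hproj : Module.Projective R N := by
    refine Module.Projective.of_split N.subtype π ?_
    ext n
    simp [hπN n]
  refine ⟨hfin, hproj, ?_⟩
  -- π vanishes on W
  have hπW : ∀ w : M, w ∈ W → π w = 0 := by
    intro w hw
    apply hA.1
    rw [hAπ, map_zero]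
    ext n
    have : φ w n = 0 := hw n n.2
    simp [Ares, hsymm n w, this]
  constructor
  · -- injectivity
    intro a b hab
    have hab' : ∀ y : W, φ y (a : M) = φ y (b : M) := fun y =>
      LinearMap.congr_fun hab y
    have hall : ∀ m : M, φ m (a : M) = φ m (b : M) := by
      intro m
      have h1 : φ (π m) (a : M) = φ (π m) (b : M) := by
        rw [hsymm _ (a:M), hsymm _ (b:M), a.2 _ (π m).2, b.2 _ (π m).2]
      have h2 := hab' ⟨m - π m, hsub m⟩
      calc φ m (a : M) = φ (π m) (a:M) + φ (m - π m) (a:M) := by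
            simp [map_sub, LinearMap.sub_apply]
        _ = φ (π m) (b:M) + φ (m - π m) (b:M) := by rw [h1, h2]
        _ = φ m (b:M) := by simp [map_sub, LinearMap.sub_apply]
    apply Subtype.ext
    apply hnd.1
    ext m
    exact hall m
  · -- surjectivity
    intro f
    -- q : M →ₗ W, m ↦ m - π m
    let q : M →ₗ[R] W :=
      { toFun := fun m => ⟨m - π m, hsub m⟩
        map_add' := by intro a b; apply Subtype.ext; simp; abel
        map_smul' := by intro c a; apply Subtype.ext; simp [smul_sub] }
    obtain ⟨m, hm⟩ := hnd.2 (f ∘ₗ q)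
    have hm' : ∀ y : M, φ y m = f (q y) := fun y => LinearMap.congr_fun hm y
    have hmem : m ∈ W := by
      intro n hn
      rw [hsymm m n, hm' n]
      have : q n = 0 := by
        apply Subtype.ext
        simp [q, hπN ⟨n, hn⟩]
      rw [this, map_zero]
    refine ⟨⟨m, hmem⟩, ?_⟩
    ext w
    have hqw : q (w : M) = w := by
      apply Subtype.ext
      simp [q, hπW w w.2]
    simpa [hqw] using hm' w
end
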